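/- arXiv:2503.06022 — 4 statements merged into one kernel-verified Lean document; each statement's English description precedes it below -/
import Mathlib

section
/- Let φ : ℝ → ℝ be a bi-Lipschitz homeomorphism satisfying g ∘ φ = c·f for nonconstant polynomial functions f, g of the same degree and c > 0. Then there exist λ, k ∈ ℝ with λ ≠ 0 such that φ(t) = λt + k + α(t), where α : ℝ → ℝ is a Lipschitz analytic function with α(t) → 0 as |t| → ∞. -/
open Filter Polynomial Set


/-- Real log is analytic at positive points. -/
lemma myAnalyticAt_log {x : ℝ} (hx : 0 < x) : AnalyticAt ℝ Real.log x := by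
  have hclog : AnalyticAt ℝ Complex.log ((Complex.ofRealCLM : ℝ →L[ℝ] ℂ) x) :=
    (analyticAt_clog (by exact Complex.ofReal_mem_slitPlane.2 hx)).restrictScalars
  have h2 := hclog.comp (Complex.ofRealCLM.analyticAt x)
  have hre : AnalyticAt ℝ (⇑Complex.reCLM) ((Complex.log ∘ ⇑Complex.ofRealCLM) x) :=
    Complex.reCLM.analyticAt _
  have h1 := hre.comp h2
  apply AnalyticAt.congr (f := fun t : ℝ => (Complex.log (t : ℂ)).re)
  · exact h1
  · filter_upwards [eventually_gt_nhds hx] with t ht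
    rw [← Complex.ofReal_log ht.le]
    simp

/-- 1D analytic local inverse. -/
lemma myLocalInverse {f : ℝ → ℝ} {a : ℝ} (hf : AnalyticAt ℝ f a) (hd : deriv f a ≠ 0) :
    ∃ g : ℝ → ℝ, AnalyticAt ℝ g (f a) ∧ ∀ᶠ x in nhds a, g (f x) = x := by
  obtain ⟨pp, hps⟩ := id hf
  have hder : HasDerivAt f (continuousMultilinearCurryFin1 ℝ ℝ ℝ (pp 1) 1) a :=
    hps.hasFDerivAt.hasDerivAt
  have hda : deriv f a = continuousMultilinearCurryFin1 ℝ ℝ ℝ (pp 1) 1 := hder.deriv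
  set i : ℝ ≃L[ℝ] ℝ := ContinuousLinearEquiv.unitsEquivAut ℝ (Units.mk0 (deriv f a) hd) with hi
  have hic : (i : ℝ →L[ℝ] ℝ) = continuousMultilinearCurryFin1 ℝ ℝ ℝ (pp 1) := by
    apply ContinuousLinearMap.ext_ring
    simp [hi, ContinuousLinearEquiv.unitsEquivAut, ← hda]
  have hsd : HasStrictFDerivAt f (i : ℝ →L[ℝ] ℝ) a := by
    have h3 : HasStrictDerivAt f (deriv f a) a := (hf.contDiffAt (n := 1)).hasStrictDerivAt one_ne_zero
    have h4 : (i : ℝ →L[ℝ] ℝ) = ContinuousLinearMap.smulRight (1 : ℝ →L[ℝ] ℝ) (deriv f a) := by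
      apply ContinuousLinearMap.ext_ring
      simp [hi, ContinuousLinearEquiv.unitsEquivAut, smul_eq_mul, mul_comm]
    rw [h4]
    exact h3
  set Φ := hsd.toOpenPartialHomeomorph f with hΦ
  have hcoe : ⇑Φ = f := hsd.toOpenPartialHomeomorph_coe
  have hsrc : a ∈ Φ.source := hsd.mem_toOpenPartialHomeomorph_source
  have hp1 : pp 1 = (continuousMultilinearCurryFin1 ℝ ℝ ℝ).symm (i : ℝ →L[ℝ] ℝ) := by
    rw [hic]; simp
  have hfp : HasFPowerSeriesAt (⇑Φ) pp a := by rw [hcoe]; exact hps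
  have hsymm := Φ.hasFPowerSeriesAt_symm hsrc hfp hp1
  refine ⟨Φ.symm, ?_, ?_⟩
  · rw [← hcoe]; exact ⟨_, hsymm⟩
  · filter_upwards [Φ.open_source.mem_nhds hsrc] with x hx
    rw [← hcoe]; exact Φ.left_inv hx

lemma coeff_comp_C_mul_X (q : Polynomial ℝ) (l : ℝ) (i : ℕ) :
    (q.comp (C l * X)).coeff i = q.coeff i * l ^ i := by
  rw [Polynomial.comp, Polynomial.eval₂_eq_sum, Polynomial.sum]
  rw [Polynomial.finset_sum_coeff]
  have hterm : ∀ e : ℕ, (C (q.coeff e) * (C l * X) ^ e).coeff i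
      = if e = i then q.coeff e * l ^ e else 0 := by
    intro e
    rw [mul_pow, ← C_pow, ← mul_assoc, ← C_mul, coeff_C_mul, coeff_X_pow]
    rcases eq_or_ne e i with rfl | he
    · simp
    · simp [he, he.symm]
  rw [Finset.sum_congr rfl (fun e _ => hterm e)]
  rw [Finset.sum_ite_eq' q.support i (fun e => q.coeff e * l ^ e)]
  by_cases hi : i ∈ q.support
  · simp [hi]
  · simp [hi, Polynomial.notMem_support_iff.1 hi]

lemma comp_linear_decomp (q : Polynomial ℝ) {l : ℝ} (s : ℝ) (hl : l ≠ 0) :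
    q.comp (C l * X + C s) = Polynomial.taylor (s/l) (q.comp (C l * X)) := by
  rw [Polynomial.taylor_apply, Polynomial.comp_assoc]
  congr 1
  simp [mul_add, ← C_mul, mul_div_cancel₀ _ hl]

lemma comp_linear_coeff_top (q : Polynomial ℝ) {l : ℝ} (s : ℝ) (hl : l ≠ 0) {m : ℕ}
    (hdeg : q.natDegree = m + 1) :
    (q.comp (C l * X + C s)).coeff (m+1) = q.leadingCoeff * l ^ (m+1) := by
  rw [comp_linear_decomp q s hl, Polynomial.taylor_coeff]
  set R := q.comp (C l * X) with hR
  have hRc : ∀ i, R.coeff i = q.coeff i * l ^ i := fun i => coeff_comp_C_mul_X q l i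
  have hRd : R.natDegree = m + 1 := by
    rw [hR, natDegree_comp, natDegree_C_mul_X _ hl, hdeg, mul_one]
  have hS : (Polynomial.hasseDeriv (m+1) R).natDegree < 1 := by
    rw [Nat.lt_one_iff, ← Nat.le_zero]
    rw [natDegree_le_iff_coeff_eq_zero]
    intro N hN
    rw [Polynomial.hasseDeriv_coeff]
    rw [Polynomial.coeff_eq_zero_of_natDegree_lt (by omega : R.natDegree < N + (m+1))]
    ring
  rw [Polynomial.eval_eq_sum_range' hS]
  rw [Finset.sum_range_succ, Finset.sum_range_zero, Polynomial.hasseDeriv_coeff]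
  rw [Nat.zero_add, Nat.choose_self, hRc]
  have h2 : q.coeff (m+1) = q.leadingCoeff := by rw [← hdeg, Polynomial.leadingCoeff]
  rw [h2]
  simp

lemma comp_linear_coeff_sub (q : Polynomial ℝ) {l : ℝ} (s : ℝ) (hl : l ≠ 0) {m : ℕ}
    (hdeg : q.natDegree = m + 1) :
    (q.comp (C l * X + C s)).coeff m
      = q.coeff m * l ^ m + (m+1) * q.leadingCoeff * l ^ m * s := by
  rw [comp_linear_decomp q s hl, Polynomial.taylor_coeff]
  set R := q.comp (C l * X) with hR
  have hRc : ∀ i, R.coeff i = q.coeff i * l ^ i := fun i => coeff_comp_C_mul_X q l i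
  have hRd : R.natDegree = m + 1 := by
    rw [hR, natDegree_comp, natDegree_C_mul_X _ hl, hdeg, mul_one]
  have hS : (Polynomial.hasseDeriv m R).natDegree < 2 := by
    rw [Nat.lt_succ_iff, natDegree_le_iff_coeff_eq_zero]
    intro N hN
    rw [Polynomial.hasseDeriv_coeff]
    rw [Polynomial.coeff_eq_zero_of_natDegree_lt (by omega : R.natDegree < N + m)]
    ring
  rw [Polynomial.eval_eq_sum_range' hS]
  rw [Finset.sum_range_succ, Finset.sum_range_succ, Finset.sum_range_zero]
  rw [Polynomial.hasseDeriv_coeff, Polynomial.hasseDeriv_coeff]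
  have h1 : (1 + m).choose m = m + 1 := by
    rw [Nat.add_comm 1 m, Nat.choose_succ_self_right]
  have h2 : q.coeff (1 + m) = q.leadingCoeff := by
    rw [Nat.add_comm 1 m, ← hdeg, Polynomial.leadingCoeff]
  rw [hRc, hRc, Nat.zero_add, Nat.choose_self, h2, h1]
  push_cast
  have h3 : l ^ (1 + m) = l ^ m * l := by rw [Nat.add_comm 1 m, pow_succ]
  rw [h3]
  field_simp
  ring

lemma evpos (P : Polynomial ℝ) (h : 0 < P.leadingCoeff) : ∀ᶠ x in atTop, 0 < P.eval x := by
  rcases Nat.eq_zero_or_pos P.natDegree with h0 | h0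
  · have := Polynomial.eq_C_of_natDegree_eq_zero h0
    rw [Polynomial.leadingCoeff, h0] at h
    filter_upwards with x
    rw [this]
    simpa using h
  · exact (Polynomial.tendsto_atTop_of_leadingCoeff_nonneg P
      (Polynomial.natDegree_pos_iff_degree_pos.mp h0) h.le).eventually_gt_atTop 0

lemma qstrict (q : Polynomial ℝ) {m : ℕ} (hqd : q.natDegree = m + 1)
    (hbq : 0 < q.leadingCoeff) : ∃ M : ℝ, StrictMonoOn (fun x => q.eval x) (Ici M) := by
  set q' := Polynomial.derivative q with hq'
  have hc : q'.coeff m = q.coeff (m+1) * (m+1) := Polynomial.coeff_derivative q m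
  have hcm : q.coeff (m+1) = q.leadingCoeff := by rw [← hqd, Polynomial.leadingCoeff]
  have hd1 : q'.natDegree ≤ m := le_trans (Polynomial.natDegree_derivative_le q) (by omega)
  have hcne : q'.coeff m ≠ 0 := by
    rw [hc, hcm]; positivity
  have hd2 : q'.natDegree = m := le_antisymm hd1 (Polynomial.le_natDegree_of_ne_zero hcne)
  have hlc : 0 < q'.leadingCoeff := by
    rw [Polynomial.leadingCoeff, hd2, hc, hcm]; positivity
  obtain ⟨M, hM⟩ := (evpos q' hlc).exists_forall_of_atTop
  refine ⟨M, strictMonoOn_of_deriv_pos (convex_Ici M)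
    (Polynomial.continuous_aeval q).continuousOn ?_⟩
  intro x hx
  rw [Polynomial.deriv]
  exact hM x (le_of_lt (by simpa using hx))

lemma core (p q : Polynomial ℝ) (c l k : ℝ) (φ : ℝ → ℝ) (m : ℕ)
    (hqd : q.natDegree = m+1) (hpd : p.natDegree = m+1)
    (hc : 0 < c) (hbq : 0 < q.leadingCoeff) (hl : 0 < l)
    (h : ∀ t, q.eval (φ t) = c * p.eval t)
    (hφT : Tendsto φ atTop atTop)
    (hln : q.leadingCoeff * l^(m+1) = c * p.leadingCoeff)
    (hk : q.coeff m * l^m + (m+1) * q.leadingCoeff * l^m * k = c * p.coeff m) :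
    Tendsto (fun t => φ t - (l*t + k)) atTop (nhds 0) := by
  obtain ⟨M, hM⟩ := qstrict q hqd hbq
  rw [NormedAddCommGroup.tendsto_nhds_zero]
  intro ε hε
  have hcomp_nd : ∀ s : ℝ, (q.comp (C l * X + C s)).natDegree = m + 1 := by
    intro s
    rw [Polynomial.natDegree_comp, Polynomial.natDegree_linear hl.ne', hqd, mul_one]
  have hCp_nd : (C c * p).natDegree = m + 1 := by
    rw [Polynomial.natDegree_C_mul hc.ne', hpd]
  have hpcm : p.coeff (m+1) = p.leadingCoeff := by rw [← hpd, Polynomial.leadingCoeff]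
  have keyD : ∀ s : ℝ, (q.comp (C l * X + C s) - C c * p).natDegree ≤ m ∧
      (q.comp (C l * X + C s) - C c * p).coeff m = (m+1) * q.leadingCoeff * l^m * (s - k) := by
    intro s
    constructor
    · rw [Polynomial.natDegree_le_iff_coeff_eq_zero]
      intro N hN
      rw [Polynomial.coeff_sub]
      rcases eq_or_lt_of_le (Nat.succ_le_of_lt hN) with hNe | hNl
      · rw [← hNe, comp_linear_coeff_top q s hl.ne' hqd, Polynomial.coeff_C_mul, hpcm, hln]
        ring
      · have h1 : (q.comp (C l * X + C s)).natDegree < N := by rw [hcomp_nd s]; omega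
        have h2 : (C c * p).natDegree < N := by rw [hCp_nd]; omega
        rw [Polynomial.coeff_eq_zero_of_natDegree_lt h1, Polynomial.coeff_eq_zero_of_natDegree_lt h2]
        ring
    · rw [Polynomial.coeff_sub, comp_linear_coeff_sub q s hl.ne' hqd, Polynomial.coeff_C_mul]
      linear_combination hk
  -- upper comparison polynomial
  have hDp := keyD (k + ε)
  set Dp := q.comp (C l * X + C (k + ε)) - C c * p with hDpdef
  have hDpc : Dp.coeff m = (m+1) * q.leadingCoeff * l^m * ε := by
    rw [hDp.2]; ring
  have hDpc_pos : 0 < Dp.coeff m := by rw [hDpc]; positivity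
  have hDpnd : Dp.natDegree = m :=
    le_antisymm hDp.1 (Polynomial.le_natDegree_of_ne_zero hDpc_pos.ne')
  have hDplead : 0 < Dp.leadingCoeff := by
    rw [Polynomial.leadingCoeff, hDpnd]; exact hDpc_pos
  -- lower comparison polynomial
  have hDm := keyD (k - ε)
  set Dm := C c * p - q.comp (C l * X + C (k - ε)) with hDmdef
  have hDmeq : Dm = -(q.comp (C l * X + C (k - ε)) - C c * p) := by ring
  have hDmc : Dm.coeff m = (m+1) * q.leadingCoeff * l^m * ε := by
    rw [hDmeq, Polynomial.coeff_neg, hDm.2]; ring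
  have hDmc_pos : 0 < Dm.coeff m := by rw [hDmc]; positivity
  have hDmnd : Dm.natDegree = m := by
    refine le_antisymm ?_ (Polynomial.le_natDegree_of_ne_zero hDmc_pos.ne')
    rw [hDmeq, Polynomial.natDegree_neg]
    exact hDm.1
  have hDmlead : 0 < Dm.leadingCoeff := by
    rw [Polynomial.leadingCoeff, hDmnd]; exact hDmc_pos
  -- linear functions tend to infinity
  have TL1 : Tendsto (fun t : ℝ => l * t + (k + ε)) atTop atTop :=
    tendsto_atTop_add_const_right _ _ (tendsto_id.const_mul_atTop hl)
  have TL2 : Tendsto (fun t : ℝ => l * t + (k - ε)) atTop atTop :=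
    tendsto_atTop_add_const_right _ _ (tendsto_id.const_mul_atTop hl)
  filter_upwards [evpos Dp hDplead, evpos Dm hDmlead, hφT.eventually_ge_atTop M,
    TL1.eventually_ge_atTop M, TL2.eventually_ge_atTop M] with t h1 h2 h3 h4 h5
  have e1 : c * p.eval t < q.eval (l * t + (k + ε)) := by
    have := h1
    rw [hDpdef] at this
    simp only [Polynomial.eval_sub, Polynomial.eval_comp, Polynomial.eval_mul,
      Polynomial.eval_add, Polynomial.eval_C, Polynomial.eval_X, sub_pos] at this
    exact this
  have e2 : q.eval (l * t + (k - ε)) < c * p.eval t := by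
    have := h2
    rw [hDmdef] at this
    simp only [Polynomial.eval_sub, Polynomial.eval_comp, Polynomial.eval_mul,
      Polynomial.eval_add, Polynomial.eval_C, Polynomial.eval_X, sub_pos] at this
    exact this
  have lt1 : φ t < l * t + (k + ε) := by
    refine (hM.lt_iff_lt (h3 : φ t ∈ Ici M) (h4 : l * t + (k + ε) ∈ Ici M)).mp ?_
    show q.eval (φ t) < q.eval (l * t + (k + ε))
    rw [h t]; exact e1
  have lt2 : l * t + (k - ε) < φ t := by
    refine (hM.lt_iff_lt (h5 : l * t + (k - ε) ∈ Ici M) (h3 : φ t ∈ Ici M)).mp ?_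
    show q.eval (l * t + (k - ε)) < q.eval (φ t)
    rw [h t]; exact e2
  rw [Real.norm_eq_abs, abs_lt]
  constructor <;> linarith

lemma core' (p q : Polynomial ℝ) (c l k : ℝ) (φ : ℝ → ℝ) (m : ℕ)
    (hqd : q.natDegree = m+1) (hpd : p.natDegree = m+1)
    (hc : 0 < c) (hl : 0 < l)
    (h : ∀ t, q.eval (φ t) = c * p.eval t)
    (hφT : Tendsto φ atTop atTop)
    (hln : q.leadingCoeff * l^(m+1) = c * p.leadingCoeff)
    (hk : q.coeff m * l^m + (m+1) * q.leadingCoeff * l^m * k = c * p.coeff m) :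
    Tendsto (fun t => φ t - (l*t + k)) atTop (nhds 0) := by
  have hq0 : q ≠ 0 := fun h0 => by simp [h0] at hqd
  rcases (Polynomial.leadingCoeff_ne_zero.mpr hq0).lt_or_gt with hbq | hbq
  · refine core (-p) (-q) c l k φ m ?_ ?_ hc ?_ hl ?_ hφT ?_ ?_
    · rwa [Polynomial.natDegree_neg]
    · rwa [Polynomial.natDegree_neg]
    · rw [Polynomial.leadingCoeff_neg]; linarith
    · intro t; rw [Polynomial.eval_neg, Polynomial.eval_neg, h t]; ring
    · rw [Polynomial.leadingCoeff_neg, Polynomial.leadingCoeff_neg]; linarith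
    · rw [Polynomial.coeff_neg, Polynomial.leadingCoeff_neg, Polynomial.coeff_neg]; linarith
  · exact core p q c l k φ m hqd hpd hc hbq hl h hφT hln hk

lemma not_tendsto_top_bot {f : ℝ → ℝ} (hT : Tendsto f atTop atTop)
    (hB : Tendsto f atTop atBot) : False := by
  obtain ⟨t, ht1, ht2⟩ := ((hT.eventually_ge_atTop 1).and (hB.eventually_le_atBot 0)).exists
  linarith

lemma pos_ratio (p q : Polynomial ℝ) (c : ℝ) (hc : 0 < c) (m : ℕ)
    (hqd : q.natDegree = m+1) (hpd : p.natDegree = m+1) (ψ : ℝ → ℝ)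
    (h : ∀ t, q.eval (ψ t) = c * p.eval t) (hψ : Tendsto ψ atTop atTop) :
    0 < c * p.leadingCoeff / q.leadingCoeff := by
  have hq0 : q ≠ 0 := fun h0 => by simp [h0] at hqd
  have hp0 : p ≠ 0 := fun h0 => by simp [h0] at hpd
  have hqlc := Polynomial.leadingCoeff_ne_zero.mpr hq0
  have hplc := Polynomial.leadingCoeff_ne_zero.mpr hp0
  have hqdeg : 0 < q.degree := Polynomial.natDegree_pos_iff_degree_pos.mp (by omega)
  have hpdeg : 0 < p.degree := Polynomial.natDegree_pos_iff_degree_pos.mp (by omega)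
  have heq : (fun t => c * p.eval t) = (fun x => q.eval x) ∘ ψ := by
    funext t; exact (h t).symm
  rcases hqlc.lt_or_gt with hbq | hbq
  · -- q.leadingCoeff < 0 : c * p.eval tendsto atBot, so p.lead < 0
    have h1 : Tendsto (fun x => q.eval x) atTop atBot :=
      Polynomial.tendsto_atBot_of_leadingCoeff_nonpos q hqdeg hbq.le
    have h2 : Tendsto (fun t => c * p.eval t) atTop atBot := heq ▸ h1.comp hψ
    have h3 : ¬ (0 < p.leadingCoeff) := by
      intro hap
      have h4 : Tendsto (fun x => p.eval x) atTop atTop :=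
        Polynomial.tendsto_atTop_of_leadingCoeff_nonneg p hpdeg hap.le
      exact not_tendsto_top_bot (h4.const_mul_atTop hc) h2
    have hap : p.leadingCoeff < 0 := lt_of_le_of_ne (not_lt.mp h3) hplc
    have : c * p.leadingCoeff < 0 := mul_neg_of_pos_of_neg hc hap
    exact div_pos_of_neg_of_neg this hbq
  · have h1 : Tendsto (fun x => q.eval x) atTop atTop :=
      Polynomial.tendsto_atTop_of_leadingCoeff_nonneg q hqdeg hbq.le
    have h2 : Tendsto (fun t => c * p.eval t) atTop atTop := heq ▸ h1.comp hψ
    have h3 : ¬ (p.leadingCoeff < 0) := by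
      intro hap
      have h4 : Tendsto (fun x => p.eval x) atTop atBot :=
        Polynomial.tendsto_atBot_of_leadingCoeff_nonpos p hpdeg hap.le
      have h5 : Tendsto (fun t => c * p.eval t) atTop atBot := by
        have := h4.const_mul_atBot hc
        simpa using this
      exact not_tendsto_top_bot h2 h5
    have hap : 0 < p.leadingCoeff := lt_of_le_of_ne (not_lt.mp h3) hplc.symm
    positivity

lemma mono_surj_tendsto_top {φ : ℝ → ℝ} (hmono : Monotone φ)
    (hsurj : Function.Surjective φ) : Tendsto φ atTop atTop := by
  rw [tendsto_atTop_atTop]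
  intro b
  obtain ⟨t, ht⟩ := hsurj b
  exact ⟨t, fun a ha => ht ▸ hmono ha⟩

lemma mono_surj_tendsto_bot {φ : ℝ → ℝ} (hmono : Monotone φ)
    (hsurj : Function.Surjective φ) : Tendsto φ atBot atBot := by
  rw [tendsto_atBot_atBot]
  intro b
  obtain ⟨t, ht⟩ := hsurj b
  exact ⟨t, fun a ha => ht ▸ hmono ha⟩

lemma negX_eq : (-X : Polynomial ℝ) = C (-1) * X := by
  rw [map_neg, C_1]; ring

lemma coeff_comp_negX (q : Polynomial ℝ) (i : ℕ) :
    (q.comp (-X)).coeff i = q.coeff i * (-1)^i := by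
  rw [negX_eq, coeff_comp_C_mul_X]

lemma natDegree_comp_negX (q : Polynomial ℝ) : (q.comp (-X)).natDegree = q.natDegree := by
  rw [Polynomial.natDegree_comp, Polynomial.natDegree_neg, Polynomial.natDegree_X, mul_one]

lemma leadingCoeff_comp_negX (q : Polynomial ℝ) :
    (q.comp (-X)).leadingCoeff = q.leadingCoeff * (-1)^q.natDegree := by
  rw [Polynomial.leadingCoeff, natDegree_comp_negX, coeff_comp_negX, Polynomial.leadingCoeff]

lemma eval_comp_negX (q : Polynomial ℝ) (t : ℝ) : (q.comp (-X)).eval t = q.eval (-t) := by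
  simp [Polynomial.eval_comp]

lemma asymp (p q : Polynomial ℝ) (c : ℝ) (φ : ℝ → ℝ) (m : ℕ)
    (hqd : q.natDegree = m+1) (hpd : p.natDegree = m+1) (hc : 0 < c)
    (h : ∀ t, q.eval (φ t) = c * p.eval t)
    (hbij : Function.Bijective φ) (hcont : Continuous φ) :
    ∃ l k : ℝ, l ≠ 0 ∧ Tendsto (fun t => φ t - (l*t+k)) atTop (nhds 0)
      ∧ Tendsto (fun t => φ t - (l*t+k)) atBot (nhds 0) := by
  have hq0 : q ≠ 0 := fun h0 => by simp [h0] at hqd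
  have hqlc := Polynomial.leadingCoeff_ne_zero.mpr hq0
  have hee : ((-1:ℝ))^m * ((-1:ℝ))^m = 1 := by
    rw [← pow_add]; exact Even.neg_one_pow ⟨m, rfl⟩
  have hmr : ((m:ℝ)+1) ≠ 0 := by positivity
  rcases hcont.strictMono_of_inj hbij.1 with hmono | hanti
  · -- increasing case
    have hT := mono_surj_tendsto_top hmono.monotone hbij.2
    have hB := mono_surj_tendsto_bot hmono.monotone hbij.2
    set x := c * p.leadingCoeff / q.leadingCoeff with hxdef
    have hx : 0 < x := pos_ratio p q c hc m hqd hpd φ h hT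
    set l := x ^ ((1:ℝ)/(m+1)) with hldef
    have hl : 0 < l := Real.rpow_pos_of_pos hx _
    have hlpow : l ^ (m+1) = x := by
      rw [hldef, ← Real.rpow_natCast (x ^ ((1:ℝ)/(m+1))) (m+1), ← Real.rpow_mul hx.le]
      rw [show (1:ℝ)/(m+1) * ((m+1 : ℕ) : ℝ) = 1 by push_cast; field_simp]
      exact Real.rpow_one x
    have hln : q.leadingCoeff * l^(m+1) = c * p.leadingCoeff := by
      rw [hlpow, hxdef]; field_simp
    set k := (c * p.coeff m - q.coeff m * l^m) / (((m:ℝ)+1) * q.leadingCoeff * l^m) with hkdef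
    have hk : q.coeff m * l^m + ((m:ℝ)+1) * q.leadingCoeff * l^m * k = c * p.coeff m := by
      rw [hkdef]
      field_simp
      ring
    have A1 := core' p q c l k φ m hqd hpd hc hl h hT hln hk
    -- atBot via reflection
    set ψ := fun t : ℝ => -φ (-t) with hψdef
    set q₂ := q.comp (-X) with hq₂
    set p₂ := p.comp (-X) with hp₂
    have hqd₂ : q₂.natDegree = m+1 := by rw [hq₂, natDegree_comp_negX, hqd]
    have hpd₂ : p₂.natDegree = m+1 := by rw [hp₂, natDegree_comp_negX, hpd]
    have hψT : Tendsto ψ atTop atTop := by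
      have h1 : Tendsto (fun t : ℝ => φ (-t)) atTop atBot := hB.comp tendsto_neg_atTop_atBot
      exact tendsto_neg_atBot_atTop.comp h1
    have h₂ : ∀ t, q₂.eval (ψ t) = c * p₂.eval t := by
      intro t
      rw [hq₂, hp₂, eval_comp_negX, eval_comp_negX, hψdef]
      simp only [neg_neg]
      exact h (-t)
    have hln₂ : q₂.leadingCoeff * l^(m+1) = c * p₂.leadingCoeff := by
      rw [hq₂, hp₂, leadingCoeff_comp_negX, leadingCoeff_comp_negX, hqd, hpd]
      linear_combination ((-1:ℝ))^(m+1) * hln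
    have hk₂ : q₂.coeff m * l^m + ((m:ℝ)+1) * q₂.leadingCoeff * l^m * (-k) = c * p₂.coeff m := by
      rw [hq₂, hp₂, coeff_comp_negX, coeff_comp_negX, leadingCoeff_comp_negX, hqd]
      linear_combination ((-1:ℝ))^m * hk
    have A2 := core' p₂ q₂ c l (-k) ψ m hqd₂ hpd₂ hc hl h₂ hψT hln₂ hk₂
    have A2' : Tendsto (fun t => φ (-t) - (l * (-t) + k)) atTop (nhds 0) := by
      have := A2.neg
      rw [neg_zero] at this
      apply this.congr
      intro t
      rw [hψdef]
      ring
    have A2'' : Tendsto (fun t => φ t - (l*t+k)) atBot (nhds 0) := by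
      have := A2'.comp tendsto_neg_atBot_atTop
      apply this.congr
      intro t
      simp [Function.comp]
    exact ⟨l, k, hl.ne', A1, A2''⟩
  · -- decreasing case
    have hnmono : Monotone (fun t => -φ t) := fun a b hab => neg_le_neg (hanti.antitone hab)
    have hnsurj : Function.Surjective (fun t : ℝ => -φ t) := by
      intro y
      obtain ⟨t, ht⟩ := hbij.2 (-y)
      exact ⟨t, by simp [ht]⟩
    have hnT : Tendsto (fun t : ℝ => -φ t) atTop atTop := mono_surj_tendsto_top hnmono hnsurj
    have hnB : Tendsto (fun t : ℝ => -φ t) atBot atBot := mono_surj_tendsto_bot hnmono hnsurj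
    have hBT : Tendsto φ atBot atTop := by
      have := tendsto_neg_atBot_atTop.comp hnB
      apply this.congr
      intro t
      simp [Function.comp]
    set ψ := fun t : ℝ => -φ t with hψdef
    set q₃ := q.comp (-X) with hq₃
    have hqd₃ : q₃.natDegree = m+1 := by rw [hq₃, natDegree_comp_negX, hqd]
    have h₃ : ∀ t, q₃.eval (ψ t) = c * p.eval t := by
      intro t
      rw [hq₃, eval_comp_negX, hψdef]
      simp only [neg_neg]
      exact h t
    have hq₃lc : q₃.leadingCoeff ≠ 0 := by
      rw [hq₃, leadingCoeff_comp_negX]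
      intro hcontra
      rcases mul_eq_zero.mp hcontra with h1 | h1
      · exact hqlc h1
      · exact (pow_ne_zero _ (by norm_num : (-1:ℝ) ≠ 0)) h1
    set x := c * p.leadingCoeff / q₃.leadingCoeff with hxdef
    have hx : 0 < x := pos_ratio p q₃ c hc m hqd₃ hpd ψ h₃ hnT
    set l := x ^ ((1:ℝ)/(m+1)) with hldef
    have hl : 0 < l := Real.rpow_pos_of_pos hx _
    have hlpow : l ^ (m+1) = x := by
      rw [hldef, ← Real.rpow_natCast (x ^ ((1:ℝ)/(m+1))) (m+1), ← Real.rpow_mul hx.le]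
      rw [show (1:ℝ)/(m+1) * ((m+1 : ℕ) : ℝ) = 1 by push_cast; field_simp]
      exact Real.rpow_one x
    have hln₃ : q₃.leadingCoeff * l^(m+1) = c * p.leadingCoeff := by
      rw [hlpow, hxdef]; field_simp
    set k := (c * p.coeff m - q₃.coeff m * l^m) / (((m:ℝ)+1) * q₃.leadingCoeff * l^m) with hkdef
    have hk₃ : q₃.coeff m * l^m + ((m:ℝ)+1) * q₃.leadingCoeff * l^m * k = c * p.coeff m := by
      rw [hkdef]
      field_simp
      ring
    have A3 := core' p q₃ c l k ψ m hqd₃ hpd hc hl h₃ hnT hln₃ hk₃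
    have A3' : Tendsto (fun t => φ t - ((-l) * t + (-k))) atTop (nhds 0) := by
      have := A3.neg
      rw [neg_zero] at this
      apply this.congr
      intro t
      rw [hψdef]
      ring
    -- atBot via reflection
    set ψ₄ := fun t : ℝ => φ (-t) with hψ₄def
    set p₄ := p.comp (-X) with hp₄
    have hpd₄ : p₄.natDegree = m+1 := by rw [hp₄, natDegree_comp_negX, hpd]
    have hψ₄T : Tendsto ψ₄ atTop atTop := hBT.comp tendsto_neg_atTop_atBot
    have h₄ : ∀ t, q.eval (ψ₄ t) = c * p₄.eval t := by
      intro t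
      rw [hp₄, eval_comp_negX, hψ₄def]
      exact h (-t)
    have hee1 : ((-1:ℝ))^(m+1) * ((-1:ℝ))^(m+1) = 1 := by
      rw [← pow_add]; exact Even.neg_one_pow ⟨m+1, by ring⟩
    have hln₄ : q.leadingCoeff * l^(m+1) = c * p₄.leadingCoeff := by
      rw [hp₄, leadingCoeff_comp_negX, hpd]
      rw [hq₃, leadingCoeff_comp_negX, hqd] at hln₃
      linear_combination ((-1:ℝ))^(m+1) * hln₃ - (q.leadingCoeff * l^(m+1)) * hee1
    have hk₄ : q.coeff m * l^m + ((m:ℝ)+1) * q.leadingCoeff * l^m * (-k) = c * p₄.coeff m := by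
      rw [hp₄, coeff_comp_negX]
      rw [hq₃, coeff_comp_negX, leadingCoeff_comp_negX, hqd] at hk₃
      linear_combination ((-1:ℝ))^m * hk₃ - (q.coeff m * l^m - ((m:ℝ)+1) * q.leadingCoeff * l^m * k) * hee
    have A4 := core' p₄ q c l (-k) ψ₄ m hqd hpd₄ hc hl h₄ hψ₄T hln₄ hk₄
    have A4' : Tendsto (fun t => φ t - ((-l)*t + (-k))) atBot (nhds 0) := by
      have := A4.comp tendsto_neg_atBot_atTop
      apply this.congr
      intro t
      simp only [Function.comp, hψ₄def, neg_neg]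
      ring_nf
    exact ⟨-l, -k, neg_ne_zero.mpr hl.ne', A3', A4'⟩

lemma polyAnalytic (P : Polynomial ℝ) (x : ℝ) : AnalyticAt ℝ (fun y => P.eval y) x := by
  have := (analyticAt_id (𝕜 := ℝ) (z := x)).aeval_polynomial P
  simpa [Polynomial.coe_aeval_eq_eval] using this

lemma Gfacts (W : Polynomial ℝ) (y₀ s : ℝ) (m : ℕ) (hm : m ≠ 0)
    (hpos : 0 < s * W.eval y₀) :
    AnalyticAt ℝ (fun y => (y - y₀) * Real.exp (Real.log (s * W.eval y) / m)) y₀ ∧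
    deriv (fun y => (y - y₀) * Real.exp (Real.log (s * W.eval y) / m)) y₀ ≠ 0 ∧
    ∀ y : ℝ, 0 < s * W.eval y →
      ((y - y₀) * Real.exp (Real.log (s * W.eval y) / m)) ^ m = (y - y₀)^m * (s * W.eval y) := by
  have hmr : (m : ℝ) ≠ 0 := Nat.cast_ne_zero.mpr hm
  have h1 : AnalyticAt ℝ (fun y => s * W.eval y) y₀ :=
    analyticAt_const.mul (polyAnalytic W y₀)
  have h2' : AnalyticAt ℝ Real.log ((fun y => s * W.eval y) y₀) := myAnalyticAt_log hpos
  have h2 := AnalyticAt.comp (g := Real.log) (f := fun y => s * W.eval y) (x := y₀) h2' h1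
  have h3 : AnalyticAt ℝ (fun y => Real.log (s * W.eval y) / m) y₀ :=
    h2.div analyticAt_const hmr
  have h4 : AnalyticAt ℝ (fun y => Real.exp (Real.log (s * W.eval y) / m)) y₀ := h3.rexp
  refine ⟨((analyticAt_id).sub analyticAt_const).mul h4, ?_, ?_⟩
  · have hd1 : HasDerivAt (fun y : ℝ => y - y₀) 1 y₀ := (hasDerivAt_id y₀).sub_const y₀
    have hd2 := h4.differentiableAt.hasDerivAt
    have hd : HasDerivAt (fun y => (y - y₀) * Real.exp (Real.log (s * W.eval y) / m)) _ y₀ := hd1.mul hd2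
    rw [hd.deriv]
    simp [Real.exp_ne_zero]
  · intro y hy
    rw [mul_pow, ← Real.exp_nat_mul, mul_div_cancel₀ _ hmr, Real.exp_log hy]

lemma abs_eq_abs_of_pow_eq_pow {a b : ℝ} {m : ℕ} (hm : m ≠ 0) (h : a^m = b^m) : |a| = |b| := by
  have h' : |a|^m = |b|^m := by rw [← abs_pow, ← abs_pow, h]
  exact (pow_left_strictMonoOn₀ hm).injOn (abs_nonneg a) (abs_nonneg b) h'

lemma analytic_pt (p q : Polynomial ℝ) (c A B : ℝ) (φ : ℝ → ℝ)
    (hpdeg : 0 < p.natDegree) (hqdeg : 0 < q.natDegree) (hc : 0 < c) (hA : 0 < A)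
    (hABl : ∀ s t, A * |s - t| ≤ |φ s - φ t|)
    (hABu : ∀ s t, |φ s - φ t| ≤ B * |s - t|)
    (hcont : Continuous φ)
    (hmono : StrictMono φ ∨ StrictAnti φ)
    (h : ∀ t, q.eval (φ t) = c * p.eval t) (t₀ : ℝ) : AnalyticAt ℝ φ t₀ := by
  set a := φ t₀ with ha
  set P₀ := p - C (p.eval t₀) with hP₀def
  set Q₀ := q - C (q.eval a) with hQ₀def
  have hP0 : P₀ ≠ 0 := by
    intro h0
    have : p = C (p.eval t₀) := by rw [← sub_eq_zero]; exact h0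
    rw [this] at hpdeg
    simp at hpdeg
  have hQ0 : Q₀ ≠ 0 := by
    intro h0
    have : q = C (q.eval a) := by rw [← sub_eq_zero]; exact h0
    rw [this] at hqdeg
    simp at hqdeg
  set m := Polynomial.rootMultiplicity t₀ P₀ with hmdef
  set mq := Polynomial.rootMultiplicity a Q₀ with hmqdef
  have hm : 0 < m := (Polynomial.rootMultiplicity_pos hP0).mpr (by simp [hP₀def, Polynomial.IsRoot])
  have hmq : 0 < mq := (Polynomial.rootMultiplicity_pos hQ0).mpr (by simp [hQ₀def, Polynomial.IsRoot])
  set V := P₀ /ₘ (X - C t₀)^m with hVdef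
  set U := Q₀ /ₘ (X - C a)^mq with hUdef
  have hVfac : (X - C t₀)^m * V = P₀ := Polynomial.pow_mul_divByMonic_rootMultiplicity_eq P₀ t₀
  have hUfac : (X - C a)^mq * U = Q₀ := Polynomial.pow_mul_divByMonic_rootMultiplicity_eq Q₀ a
  have hVne : V.eval t₀ ≠ 0 := Polynomial.eval_divByMonic_pow_rootMultiplicity_ne_zero t₀ hP0
  have hUne : U.eval a ≠ 0 := Polynomial.eval_divByMonic_pow_rootMultiplicity_ne_zero a hQ0
  have key : ∀ t, (φ t - a)^mq * U.eval (φ t) = c * ((t - t₀)^m * V.eval t) := by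
    intro t
    have h1 : Q₀.eval (φ t) = c * P₀.eval t := by
      rw [hQ₀def, hP₀def]
      simp only [Polynomial.eval_sub, Polynomial.eval_C]
      rw [h t, h t₀]
      ring
    have h2 : (φ t - a)^mq * U.eval (φ t) = Q₀.eval (φ t) := by
      rw [← hUfac]
      simp [Polynomial.eval_mul, Polynomial.eval_pow]
    have h3 : (t - t₀)^m * V.eval t = P₀.eval t := by
      rw [← hVfac]
      simp [Polynomial.eval_mul, Polynomial.eval_pow]
    rw [h2, h1, h3]
  have keyabs : ∀ t, |φ t - a|^mq * |U.eval (φ t)| = c * (|t - t₀|^m * |V.eval t|) := by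
    intro t
    have := congrArg abs (key t)
    rwa [abs_mul, abs_pow, abs_mul, abs_mul, abs_pow, abs_of_pos hc] at this
  have hUc : Continuous fun t => |U.eval (φ t)| := ((Polynomial.continuous U).comp hcont).abs
  have hVc : Continuous fun t : ℝ => |V.eval t| := (Polynomial.continuous V).abs
  -- equality of multiplicities
  have hEQ : mq = m := by
    by_contra hne
    rcases lt_or_gt_of_ne hne with hlt | hgt
    · -- mq < m
      have lim1 : Tendsto (fun t => A^mq * |U.eval (φ t)|)
          (nhdsWithin t₀ {t₀}ᶜ) (nhds (A^mq * |U.eval a|)) :=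
        ((continuous_const.mul hUc).tendsto t₀).mono_left nhdsWithin_le_nhds
      have lim2 : Tendsto (fun t => c * (|t - t₀|^(m-mq) * |V.eval t|))
          (nhdsWithin t₀ {t₀}ᶜ) (nhds 0) := by
        have hcont2 : Continuous (fun t : ℝ => c * (|t - t₀|^(m-mq) * |V.eval t|)) :=
          continuous_const.mul ((((continuous_id.sub continuous_const).abs).pow _).mul hVc)
        have hval : c * (|t₀ - t₀|^(m-mq) * |V.eval t₀|) = 0 := by
          rw [sub_self, abs_zero, zero_pow (by omega : m - mq ≠ 0)]
          ring
        exact hval ▸ (hcont2.tendsto t₀).mono_left nhdsWithin_le_nhds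
      have le12 : ∀ᶠ t in nhdsWithin t₀ {t₀}ᶜ,
          A^mq * |U.eval (φ t)| ≤ c * (|t - t₀|^(m-mq) * |V.eval t|) := by
        refine eventually_nhdsWithin_of_forall (fun t ht => ?_)
        have ht' : t ≠ t₀ := ht
        have hr : 0 < |t - t₀| := abs_pos.2 (sub_ne_zero.2 ht')
        have h1 : (A*|t - t₀|)^mq ≤ |φ t - a|^mq :=
          pow_le_pow_left₀ (by positivity) (hABl t t₀) mq
        have h2 : (A*|t - t₀|)^mq * |U.eval (φ t)| ≤ c * (|t - t₀|^m * |V.eval t|) := by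
          rw [← keyabs t]
          exact mul_le_mul_of_nonneg_right h1 (abs_nonneg _)
        rw [mul_pow] at h2
        have hsplit : |t - t₀|^m = |t - t₀|^(m-mq) * |t - t₀|^mq := by
          rw [← pow_add]; congr 1; omega
        rw [hsplit] at h2
        have e1 : A^mq * |t - t₀|^mq * |U.eval (φ t)|
            = (A^mq * |U.eval (φ t)|) * |t - t₀|^mq := by ring
        have e2 : c * (|t - t₀|^(m-mq) * |t - t₀|^mq * |V.eval t|)
            = (c * (|t - t₀|^(m-mq) * |V.eval t|)) * |t - t₀|^mq := by ring
        rw [e1, e2] at h2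
        exact le_of_mul_le_mul_right h2 (pow_pos hr mq)
      have hcon := le_of_tendsto_of_tendsto lim1 lim2 le12
      have hpos : 0 < A^mq * |U.eval a| := mul_pos (pow_pos hA _) (abs_pos.2 hUne)
      linarith
    · -- mq > m
      have lim1 : Tendsto (fun t : ℝ => c * |V.eval t|)
          (nhdsWithin t₀ {t₀}ᶜ) (nhds (c * |V.eval t₀|)) :=
        ((continuous_const.mul hVc).tendsto t₀).mono_left nhdsWithin_le_nhds
      have lim2 : Tendsto (fun t => B^mq * (|t - t₀|^(mq-m) * |U.eval (φ t)|))
          (nhdsWithin t₀ {t₀}ᶜ) (nhds 0) := by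
        have hcont2 : Continuous (fun t : ℝ => B^mq * (|t - t₀|^(mq-m) * |U.eval (φ t)|)) :=
          continuous_const.mul ((((continuous_id.sub continuous_const).abs).pow _).mul hUc)
        have hval : B^mq * (|t₀ - t₀|^(mq-m) * |U.eval (φ t₀)|) = 0 := by
          rw [sub_self, abs_zero, zero_pow (by omega : mq - m ≠ 0)]
          ring
        exact hval ▸ (hcont2.tendsto t₀).mono_left nhdsWithin_le_nhds
      have le12 : ∀ᶠ t in nhdsWithin t₀ {t₀}ᶜ,
          c * |V.eval t| ≤ B^mq * (|t - t₀|^(mq-m) * |U.eval (φ t)|) := by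
        refine eventually_nhdsWithin_of_forall (fun t ht => ?_)
        have ht' : t ≠ t₀ := ht
        have hr : 0 < |t - t₀| := abs_pos.2 (sub_ne_zero.2 ht')
        have h1 : |φ t - a|^mq ≤ (B*|t - t₀|)^mq :=
          pow_le_pow_left₀ (abs_nonneg _) (hABu t t₀) mq
        have h2 : c * (|t - t₀|^m * |V.eval t|) ≤ (B*|t - t₀|)^mq * |U.eval (φ t)| := by
          rw [← keyabs t]
          exact mul_le_mul_of_nonneg_right h1 (abs_nonneg _)
        rw [mul_pow] at h2
        have hsplit : |t - t₀|^mq = |t - t₀|^(mq-m) * |t - t₀|^m := by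
          rw [← pow_add]; congr 1; omega
        rw [hsplit] at h2
        have e1 : c * (|t - t₀|^m * |V.eval t|) = (c * |V.eval t|) * |t - t₀|^m := by ring
        have e2 : B^mq * (|t - t₀|^(mq-m) * |t - t₀|^m) * |U.eval (φ t)|
            = (B^mq * (|t - t₀|^(mq-m) * |U.eval (φ t)|)) * |t - t₀|^m := by ring
        rw [e1, e2] at h2
        exact le_of_mul_le_mul_right h2 (pow_pos hr m)
      have hcon := le_of_tendsto_of_tendsto lim1 lim2 le12
      have hpos : 0 < c * |V.eval t₀| := mul_pos hc (abs_pos.2 hVne)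
      linarith
  rw [hEQ] at key keyabs hUfac hmq
  clear hmq
  obtain ⟨s, hs1, hsU⟩ : ∃ s : ℝ, |s| = 1 ∧ 0 < s * U.eval a := by
    rcases hUne.lt_or_gt with h1 | h1
    · exact ⟨-1, by norm_num, by nlinarith⟩
    · exact ⟨1, by norm_num, by nlinarith⟩
  obtain ⟨s', hs'1, hsV⟩ : ∃ s' : ℝ, |s'| = 1 ∧ 0 < s' * ((C c * V).eval t₀) := by
    have hcv : (C c * V).eval t₀ = c * V.eval t₀ := by simp
    rcases hVne.lt_or_gt with h1 | h1
    · exact ⟨-1, by norm_num, by rw [hcv]; nlinarith⟩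
    · exact ⟨1, by norm_num, by rw [hcv]; nlinarith⟩
  obtain ⟨GA, GD, GP⟩ := Gfacts U a s m hm.ne' hsU
  obtain ⟨HA, HD, HP⟩ := Gfacts (C c * V) t₀ s' m hm.ne' hsV
  clear HD
  set G := fun y => (y - a) * Real.exp (Real.log (s * U.eval y) / m) with hG
  set H := fun t => (t - t₀) * Real.exp (Real.log (s' * ((C c * V).eval t)) / m) with hH
  have hGa : G a = 0 := by rw [hG]; simp
  have hHt₀ : H t₀ = 0 := by rw [hH]; simp
  obtain ⟨g, hg, hginv⟩ := myLocalInverse GA GD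
  have hg0 : AnalyticAt ℝ g 0 := hGa ▸ hg
  have evU : ∀ᶠ t in nhds t₀, 0 < s * U.eval (φ t) := by
    have hcU : Continuous fun t => s * U.eval (φ t) :=
      continuous_const.mul ((Polynomial.continuous U).comp hcont)
    exact (hcU.tendsto t₀).eventually (eventually_gt_nhds hsU)
  have evV : ∀ᶠ t in nhds t₀, 0 < s' * ((C c * V).eval t) := by
    have hcV : Continuous fun t : ℝ => s' * ((C c * V).eval t) :=
      continuous_const.mul (Polynomial.continuous _)
    exact (hcV.tendsto t₀).eventually (eventually_gt_nhds hsV)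
  have evg : ∀ᶠ t in nhds t₀, g (G (φ t)) = φ t := (hcont.tendsto t₀).eventually hginv
  have evabs : ∀ᶠ t in nhds t₀, |G (φ t)| = |H t| := by
    filter_upwards [evU, evV] with t h1 h2
    have e1 : G (φ t)^m = (φ t - a)^m * (s * U.eval (φ t)) := GP _ h1
    have e2 : H t^m = (t - t₀)^m * (s' * ((C c * V).eval t)) := HP _ h2
    have e3 : |G (φ t)|^m = |φ t - a|^m * |U.eval (φ t)| := by
      rw [← abs_pow, e1, abs_mul, abs_pow, abs_mul, hs1, one_mul]
    have e4 : |H t|^m = |t - t₀|^m * (c * |V.eval t|) := by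
      rw [← abs_pow, e2, abs_mul, abs_pow, abs_mul, hs'1, one_mul]
      simp [abs_mul, abs_of_pos hc]
    have e5 : |G (φ t)|^m = |H t|^m := by rw [e3, e4, keyabs t]; ring
    exact (pow_left_strictMonoOn₀ hm.ne').injOn (abs_nonneg (G (φ t))) (abs_nonneg (H t)) e5
  have hGsgn : ∀ y, a < y → 0 < G y := by
    intro y hy
    exact mul_pos (by linarith) (Real.exp_pos _)
  have hGsgn' : ∀ y, y < a → G y < 0 := by
    intro y hy
    exact mul_neg_of_neg_of_pos (by linarith) (Real.exp_pos _)
  have hHsgn : ∀ t, t₀ < t → 0 < H t := by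
    intro t ht
    exact mul_pos (by linarith) (Real.exp_pos _)
  have hHsgn' : ∀ t, t < t₀ → H t < 0 := by
    intro t ht
    exact mul_neg_of_neg_of_pos (by linarith) (Real.exp_pos _)
  rcases hmono with hinc | hdec
  · have evGH : ∀ᶠ t in nhds t₀, G (φ t) = H t := by
      filter_upwards [evabs] with t habs
      rcases lt_trichotomy t t₀ with h1 | h1 | h1
      · have g1 := hGsgn' _ (hinc h1)
        have g2 := hHsgn' _ h1
        rw [abs_of_neg g1, abs_of_neg g2] at habs
        linarith
      · subst h1
        rw [hGa, hHt₀]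
      · have g1 := hGsgn _ (hinc h1)
        have g2 := hHsgn _ h1
        rw [abs_of_pos g1, abs_of_pos g2] at habs
        exact habs
    have hgH : AnalyticAt ℝ (fun t => g (H t)) t₀ := by
      have hgat : AnalyticAt ℝ g (H t₀) := by rw [hHt₀]; exact hg0
      exact hgat.comp HA
    apply hgH.congr
    filter_upwards [evGH, evg] with t h1 h2
    rw [← h1]
    exact h2
  · have evGH : ∀ᶠ t in nhds t₀, G (φ t) = -H t := by
      filter_upwards [evabs] with t habs
      rcases lt_trichotomy t t₀ with h1 | h1 | h1
      · have g1 := hGsgn _ (hdec h1)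
        have g2 := hHsgn' _ h1
        rw [abs_of_pos g1, abs_of_neg g2] at habs
        linarith
      · subst h1
        rw [hGa, hHt₀, neg_zero]
      · have g1 := hGsgn' _ (hdec h1)
        have g2 := hHsgn _ h1
        rw [abs_of_neg g1, abs_of_pos g2] at habs
        linarith
    have hgH : AnalyticAt ℝ (fun t => g (-H t)) t₀ := by
      have hgat : AnalyticAt ℝ g ((fun t => -H t) t₀) := by
        simp only [hHt₀, neg_zero]
        exact hg0
      have HnegA : AnalyticAt ℝ (fun t => -H t) t₀ := by
        have := HA.neg
        exact this
      exact AnalyticAt.comp (g := g) (f := fun t => -H t) (x := t₀) hgat HnegA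
    apply hgH.congr
    filter_upwards [evGH, evg] with t h1 h2
    show g (-H t) = φ t
    rw [← h1]
    exact h2

/-- A bi-Lipschitz homeomorphism of ℝ: a bijection with two-sided Lipschitz bounds. -/
def BiLipschitz (φ : ℝ → ℝ) : Prop :=
  Function.Bijective φ ∧ ∃ A B : ℝ, 0 < A ∧ 0 < B ∧
    ∀ s t : ℝ, A * |s - t| ≤ |φ s - φ t| ∧ |φ s - φ t| ≤ B * |s - t|

/-- A bi-Lipschitz homeomorphism φ with g ∘ φ = c·f for nonconstant polynomial
functions f, g of the same degree and c > 0 has the form φ(t) = λt + k + α(t) with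
λ ≠ 0 and α a Lipschitz analytic function tending to 0 as |t| → ∞. -/
theorem stmt14 (p q : Polynomial ℝ) (hp : 0 < p.natDegree) (hq : 0 < q.natDegree)
    (hdeg : p.natDegree = q.natDegree)
    (φ : ℝ → ℝ) (hφ : BiLipschitz φ) (c : ℝ) (hc : 0 < c)
    (h : ∀ t : ℝ, q.eval (φ t) = c * p.eval t) :
    ∃ (l k : ℝ) (α : ℝ → ℝ), l ≠ 0 ∧
      (∀ t : ℝ, φ t = l * t + k + α t) ∧
      (∃ K : NNReal, LipschitzWith K α) ∧
      (∀ x : ℝ, AnalyticAt ℝ α x) ∧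
      Filter.Tendsto α Filter.atTop (nhds 0) ∧
      Filter.Tendsto α Filter.atBot (nhds 0) := by
  obtain ⟨hbij, A, B, hA, hB, hAB⟩ := hφ
  have hABl : ∀ s t, A * |s - t| ≤ |φ s - φ t| := fun s t => (hAB s t).1
  have hABu : ∀ s t, |φ s - φ t| ≤ B * |s - t| := fun s t => (hAB s t).2
  have hlip : LipschitzWith ⟨B, hB.le⟩ φ := by
    apply LipschitzWith.of_dist_le_mul
    intro x y
    rw [Real.dist_eq, Real.dist_eq]
    exact hABu x y
  have hcont : Continuous φ := hlip.continuous
  have hmono := hcont.strictMono_of_inj hbij.1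
  set m := q.natDegree - 1 with hm
  have hqd : q.natDegree = m + 1 := by omega
  have hpd : p.natDegree = m + 1 := by omega
  obtain ⟨l, k, hl0, hT, hBot⟩ := asymp p q c φ m hqd hpd hc h hbij hcont
  refine ⟨l, k, fun t => φ t - (l * t + k), hl0, fun t => by ring, ?_, ?_, hT, hBot⟩
  · refine ⟨⟨B + |l|, by positivity⟩, LipschitzWith.of_dist_le_mul fun s t => ?_⟩
    rw [Real.dist_eq, Real.dist_eq]
    have h1 : φ s - (l * s + k) - (φ t - (l * t + k)) = (φ s - φ t) - l * (s - t) := by ring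
    rw [h1]
    calc |(φ s - φ t) - l * (s - t)| ≤ |φ s - φ t| + |l * (s - t)| := abs_sub _ _
      _ ≤ B * |s - t| + |l| * |s - t| := by
          rw [abs_mul]
          exact add_le_add (hABu s t) le_rfl
      _ = (⟨B + |l|, by positivity⟩ : NNReal) * |s - t| := by
          push_cast
          ring
  · intro x
    have h1 : AnalyticAt ℝ φ x :=
      analytic_pt p q c A B φ hp hq hc hA hABl hABu hcont hmono h x
    have h2 : AnalyticAt ℝ (fun t : ℝ => l * t + k) x :=
      (analyticAt_const.mul analyticAt_id).add analyticAt_const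
    exact h1.sub h2
end

section
/- Let φ : ℝ → ℝ be a bi-Lipschitz function satisfying g ∘ φ = f for some nonconstant polynomials f, g, let λ ≠ 0 be real, and let β > 1 be rational. Define Φ on the open right half-plane by Φ(x, t·x^β) = (λx, |λ|^β·φ(t)·x^β) for x > 0, t ∈ ℝ. Then for every δ > 0, Φ is Lipschitz on the strip {(x, y) : 0 < x < δ}. -/
open Finset Polynomial

namespace Stmt16Aux



/-- divided power sum: (x-y) * Gs k x y = x^k - y^k -/
noncomputable def Gs (k : ℕ) (x y : ℝ) : ℝ := ∑ i ∈ Finset.range k, x ^ i * y ^ (k - 1 - i)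

lemma sub_mul_Gs (k : ℕ) (x y : ℝ) : (x - y) * Gs k x y = x ^ k - y ^ k := by
  rw [Gs, mul_comm]; exact geom_sum₂_mul x y k

lemma abs_Gs_le {k : ℕ} {x y R : ℝ} (hx : |x| ≤ R) (hy : |y| ≤ R) :
    |Gs k x y| ≤ k * R ^ (k - 1) := by
  have hR : 0 ≤ R := le_trans (abs_nonneg x) hx
  calc |Gs k x y| ≤ ∑ i ∈ Finset.range k, |x ^ i * y ^ (k - 1 - i)| :=
        Finset.abs_sum_le_sum_abs _ _
    _ ≤ ∑ i ∈ Finset.range k, R ^ (k - 1) := by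
        apply Finset.sum_le_sum
        intro i hi
        rw [abs_mul, abs_pow, abs_pow]
        have hik : i + (k - 1 - i) = k - 1 := by
          have := Finset.mem_range.mp hi; omega
        calc |x| ^ i * |y| ^ (k - 1 - i) ≤ R ^ i * R ^ (k - 1 - i) := by
              apply mul_le_mul (pow_le_pow_left₀ (abs_nonneg x) hx i)
                (pow_le_pow_left₀ (abs_nonneg y) hy _) (pow_nonneg (abs_nonneg y) _)
                (pow_nonneg hR i)
          _ = R ^ (k - 1) := by rw [← pow_add, hik]
    _ = k * R ^ (k - 1) := by rw [Finset.sum_const, Finset.card_range, nsmul_eq_mul]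

lemma abs_pow_sub_pow_le {i : ℕ} {x y R : ℝ} (hx : |x| ≤ R) (hy : |y| ≤ R) :
    |x ^ i - y ^ i| ≤ i * R ^ (i - 1) * |x - y| := by
  rw [← sub_mul_Gs i x y, abs_mul, mul_comm (|x - y|)]
  exact mul_le_mul_of_nonneg_right (abs_Gs_le hx hy) (abs_nonneg _)

-- lower bound for positive args
lemma Gs_ge_of_pos {k : ℕ} (hk : 1 ≤ k) {x y : ℝ} (hx : 0 ≤ x) (hy : 0 ≤ y) :
    max x y ^ (k - 1) ≤ Gs k x y := by
  rcases max_cases x y with ⟨hm, hxy⟩ | ⟨hm, hxy⟩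
  · -- max = x : take term i = k-1
    rw [hm]
    have hmem : k - 1 ∈ Finset.range k := Finset.mem_range.mpr (by omega)
    calc x ^ (k-1) = x ^ (k-1) * y ^ (k - 1 - (k-1)) := by
          rw [Nat.sub_self, pow_zero, mul_one]
      _ ≤ Gs k x y := Finset.single_le_sum (f := fun i => x ^ i * y ^ (k-1-i))
          (fun i _ => mul_nonneg (pow_nonneg hx i) (pow_nonneg hy _)) hmem
  · rw [hm]
    have hmem : 0 ∈ Finset.range k := Finset.mem_range.mpr (by omega)
    calc y ^ (k-1) = x ^ 0 * y ^ (k - 1 - 0) := by rw [pow_zero, one_mul, Nat.sub_zero]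
      _ ≤ Gs k x y := Finset.single_le_sum (f := fun i => x ^ i * y ^ (k-1-i))
          (fun i _ => mul_nonneg (pow_nonneg hx i) (pow_nonneg hy _)) hmem

lemma Gs_neg_neg (k : ℕ) (x y : ℝ) : Gs k (-x) (-y) = (-1) ^ (k-1) * Gs k x y := by
  rw [Gs, Gs, Finset.mul_sum]
  apply Finset.sum_congr rfl
  intro i hi
  have hik : i + (k - 1 - i) = k - 1 := by have := Finset.mem_range.mp hi; omega
  rw [neg_pow, neg_pow]
  ring_nf
  rw [mul_assoc, ← pow_add, hik]

lemma abs_Gs_ge {k : ℕ} (hk : 1 ≤ k) {x y : ℝ} (hxy : 0 < x * y) :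
    max |x| |y| ^ (k - 1) ≤ |Gs k x y| := by
  rcases mul_pos_iff.mp hxy with ⟨hx, hy⟩ | ⟨hx, hy⟩
  · rw [abs_of_pos hx, abs_of_pos hy]
    exact le_trans (Gs_ge_of_pos hk hx.le hy.le) (le_abs_self _)
  · rw [abs_of_neg hx, abs_of_neg hy]
    have h := Gs_ge_of_pos hk (x := -x) (y := -y) (by linarith) (by linarith)
    rw [Gs_neg_neg] at h
    calc max (-x) (-y) ^ (k-1) ≤ |(-1:ℝ)^(k-1) * Gs k x y| := le_trans h (le_abs_self _)
      _ = |Gs k x y| := by rw [abs_mul, abs_pow, abs_neg, abs_one, one_pow, one_mul]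

/-- key bilinear estimate, multiplied through by `R` to avoid truncated subtraction -/
lemma mul_pow_diff {i j : ℕ} {u v u' v' R : ℝ} (hR : 1 ≤ R)
    (hu : |u| ≤ R) (hv : |v| ≤ R) (hu' : |u'| ≤ R) (hv' : |v'| ≤ R) :
    R * |u ^ i * v ^ j - u' ^ i * v' ^ j| ≤
      (i + j) * R ^ (i + j) * (|u - u'| + |v - v'|) := by
  have hR0 : 0 ≤ R := le_trans zero_le_one hR
  have h1 : |u ^ i * v ^ j - u' ^ i * v' ^ j| ≤
      |u ^ i - u' ^ i| * R ^ j + R ^ i * |v ^ j - v' ^ j| := by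
    have : u ^ i * v ^ j - u' ^ i * v' ^ j
        = (u ^ i - u' ^ i) * v ^ j + u' ^ i * (v ^ j - v' ^ j) := by ring
    rw [this]
    refine le_trans (abs_add_le _ _) (add_le_add ?_ ?_)
    · rw [abs_mul]
      exact mul_le_mul_of_nonneg_left (by rw [abs_pow]; exact pow_le_pow_left₀ (abs_nonneg v) hv j) (abs_nonneg _)
    · rw [abs_mul]
      exact mul_le_mul_of_nonneg_right (by rw [abs_pow]; exact pow_le_pow_left₀ (abs_nonneg u') hu' i) (abs_nonneg _)
  have h2 : R * (|u ^ i - u' ^ i| * R ^ j) ≤ i * R ^ (i + j) * |u - u'| := by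
    rcases Nat.eq_zero_or_pos i with hi | hi
    · subst hi; simp
    · have := abs_pow_sub_pow_le (i := i) hu hu'
      calc R * (|u ^ i - u' ^ i| * R ^ j) ≤ R * ((i * R ^ (i-1) * |u - u'|) * R ^ j) := by
            apply mul_le_mul_of_nonneg_left _ hR0
            exact mul_le_mul_of_nonneg_right this (pow_nonneg hR0 j)
        _ = i * (R * R ^ (i-1) * R ^ j) * |u - u'| := by ring
        _ = i * R ^ (i + j) * |u - u'| := by
            have h4 : R * R ^ (i-1) = R ^ i := by
              rw [← pow_succ']; congr 1; omega
            rw [h4, ← pow_add]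
  have h3 : R * (R ^ i * |v ^ j - v' ^ j|) ≤ j * R ^ (i + j) * |v - v'| := by
    rcases Nat.eq_zero_or_pos j with hj | hj
    · subst hj; simp
    · have := abs_pow_sub_pow_le (i := j) hv hv'
      calc R * (R ^ i * |v ^ j - v' ^ j|) ≤ R * (R ^ i * (j * R ^ (j-1) * |v - v'|)) := by
            apply mul_le_mul_of_nonneg_left _ hR0
            exact mul_le_mul_of_nonneg_left this (pow_nonneg hR0 i)
        _ = j * (R ^ i * (R * R ^ (j-1))) * |v - v'| := by ring
        _ = j * R ^ (i + j) * |v - v'| := by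
            have h4 : R * R ^ (j-1) = R ^ j := by
              rw [← pow_succ']; congr 1; omega
            rw [h4, ← pow_add]
  calc R * |u ^ i * v ^ j - u' ^ i * v' ^ j| ≤
      R * (|u ^ i - u' ^ i| * R ^ j + R ^ i * |v ^ j - v' ^ j|) :=
        mul_le_mul_of_nonneg_left h1 hR0
    _ = R * (|u ^ i - u' ^ i| * R ^ j) + R * (R ^ i * |v ^ j - v' ^ j|) := by ring
    _ ≤ i * R ^ (i + j) * |u - u'| + j * R ^ (i + j) * |v - v'| := add_le_add h2 h3
    _ ≤ (i + j) * R ^ (i + j) * (|u - u'| + |v - v'|) := by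
        have hpow : (0:ℝ) ≤ R ^ (i + j) := pow_nonneg hR0 _
        nlinarith [abs_nonneg (u - u'), abs_nonneg (v - v'), hpow,
          mul_nonneg (mul_nonneg (Nat.cast_nonneg (α := ℝ) i) hpow) (abs_nonneg (v - v')),
          mul_nonneg (mul_nonneg (Nat.cast_nonneg (α := ℝ) j) hpow) (abs_nonneg (u - u'))]

/-- difference of Gs, multiplied through by R -/
lemma mul_Gs_diff {k : ℕ} {x y x' y' R : ℝ} (hR : 1 ≤ R)
    (hx : |x| ≤ R) (hy : |y| ≤ R) (hx' : |x'| ≤ R) (hy' : |y'| ≤ R) :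
    R * |Gs k x y - Gs k x' y'| ≤ k * (k * R ^ (k-1) * (|x - x'| + |y - y'|)) := by
  have hR0 : 0 ≤ R := le_trans zero_le_one hR
  have h : |Gs k x y - Gs k x' y'| ≤
      ∑ i ∈ Finset.range k, |x ^ i * y ^ (k-1-i) - x' ^ i * y' ^ (k-1-i)| := by
    rw [Gs, Gs, ← Finset.sum_sub_distrib]
    exact Finset.abs_sum_le_sum_abs _ _
  calc R * |Gs k x y - Gs k x' y'| ≤
      ∑ i ∈ Finset.range k, R * |x ^ i * y ^ (k-1-i) - x' ^ i * y' ^ (k-1-i)| := by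
        rw [← Finset.mul_sum]
        exact mul_le_mul_of_nonneg_left h hR0
    _ ≤ ∑ i ∈ Finset.range k, k * R ^ (k-1) * (|x - x'| + |y - y'|) := by
        apply Finset.sum_le_sum
        intro i hi
        have hik : i + (k - 1 - i) = k - 1 := by have := Finset.mem_range.mp hi; omega
        have := mul_pow_diff (i := i) (j := k-1-i) hR hx hy hx' hy'
        rw [hik] at this
        refine le_trans this ?_
        apply mul_le_mul_of_nonneg_right _ (by positivity)
        apply mul_le_mul_of_nonneg_right _ (pow_nonneg hR0 _)
        have h5 : i + (k-1-i) ≤ k := by omega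
        exact_mod_cast h5
    _ = k * (k * R ^ (k-1) * (|x - x'| + |y - y'|)) := by
        rw [Finset.sum_const, Finset.card_range, nsmul_eq_mul]

/-- divided difference of a polynomial -/
noncomputable def DD (P : Polynomial ℝ) (x y : ℝ) : ℝ :=
  ∑ k ∈ Finset.range (P.natDegree + 1), P.coeff k * Gs k x y

lemma eval_sub_eval (P : Polynomial ℝ) (x y : ℝ) :
    P.eval x - P.eval y = (x - y) * DD P x y := by
  rw [P.eval_eq_sum_range x, P.eval_eq_sum_range y, ← Finset.sum_sub_distrib, DD,
    Finset.mul_sum]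
  apply Finset.sum_congr rfl
  intro k _
  rw [← mul_sub, ← sub_mul_Gs k x y]
  ring

noncomputable def CP (P : Polynomial ℝ) : ℝ :=
  ∑ k ∈ Finset.range (P.natDegree + 1), |P.coeff k| * k

lemma CP_nonneg (P : Polynomial ℝ) : 0 ≤ CP P :=
  Finset.sum_nonneg fun k _ => mul_nonneg (abs_nonneg _) (Nat.cast_nonneg k)

lemma abs_DD_le (P : Polynomial ℝ) {x y R : ℝ} (hR : 1 ≤ R)
    (hx : |x| ≤ R) (hy : |y| ≤ R) :
    |DD P x y| ≤ CP P * R ^ (P.natDegree - 1) := by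
  have hR0 : 0 ≤ R := le_trans zero_le_one hR
  rw [DD, CP, Finset.sum_mul]
  refine le_trans (Finset.abs_sum_le_sum_abs _ _) (Finset.sum_le_sum ?_)
  intro k hk
  rw [abs_mul]
  calc |P.coeff k| * |Gs k x y| ≤ |P.coeff k| * (k * R ^ (k-1)) :=
        mul_le_mul_of_nonneg_left (abs_Gs_le hx hy) (abs_nonneg _)
    _ ≤ |P.coeff k| * k * R ^ (P.natDegree - 1) := by
        rw [mul_assoc]
        apply mul_le_mul_of_nonneg_left _ (abs_nonneg _)
        apply mul_le_mul_of_nonneg_left _ (Nat.cast_nonneg k)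
        exact pow_le_pow_right₀ hR (by have := Finset.mem_range.mp hk; omega)

/-- tail of DD: everything except the top term, times R -/
lemma mul_abs_DD_sub_top_le (P : Polynomial ℝ) {x y R : ℝ} (hR : 1 ≤ R)
    (hx : |x| ≤ R) (hy : |y| ≤ R) :
    R * |DD P x y - P.coeff P.natDegree * Gs P.natDegree x y| ≤
      CP P * R ^ (P.natDegree - 1) := by
  have hR0 : 0 ≤ R := le_trans zero_le_one hR
  have hsum : DD P x y - P.coeff P.natDegree * Gs P.natDegree x y =
      ∑ k ∈ Finset.range P.natDegree, P.coeff k * Gs k x y := by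
    rw [DD, Finset.sum_range_succ]; ring
  rw [hsum, CP, Finset.sum_mul]
  calc R * |∑ k ∈ Finset.range P.natDegree, P.coeff k * Gs k x y|
      ≤ ∑ k ∈ Finset.range P.natDegree, R * |P.coeff k * Gs k x y| := by
        rw [← Finset.mul_sum]
        exact mul_le_mul_of_nonneg_left (Finset.abs_sum_le_sum_abs _ _) hR0
    _ ≤ ∑ k ∈ Finset.range P.natDegree, |P.coeff k| * k * R ^ (P.natDegree - 1) := by
        apply Finset.sum_le_sum
        intro k hk
        have hkn : k < P.natDegree := Finset.mem_range.mp hk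
        rcases Nat.eq_zero_or_pos k with hk0 | hk1
        · subst hk0; simp [Gs]
        · rw [abs_mul]
          calc R * (|P.coeff k| * |Gs k x y|) ≤ R * (|P.coeff k| * (k * R ^ (k-1))) := by
                apply mul_le_mul_of_nonneg_left _ hR0
                exact mul_le_mul_of_nonneg_left (abs_Gs_le hx hy) (abs_nonneg _)
            _ = |P.coeff k| * k * (R * R ^ (k-1)) := by ring
            _ ≤ |P.coeff k| * k * R ^ (P.natDegree - 1) := by
                apply mul_le_mul_of_nonneg_left _
                  (mul_nonneg (abs_nonneg _) (Nat.cast_nonneg k))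
                have h4 : R * R ^ (k-1) = R ^ k := by
                  rw [← pow_succ']; congr 1; omega
                rw [h4]
                exact pow_le_pow_right₀ hR (by omega)
    _ ≤ ∑ k ∈ Finset.range (P.natDegree + 1), |P.coeff k| * k * R ^ (P.natDegree - 1) := by
        apply Finset.sum_le_sum_of_subset_of_nonneg
          (Finset.range_subset_range.mpr (Nat.le_succ _))
        intro k _ _
        positivity



lemma rpow_diff_le {b δ : ℝ} (hb : 1 ≤ b) (hδ : 0 < δ) {x x' : ℝ} (hx : 0 < x)
    (hxx' : x ≤ x') (hx'δ : x' ≤ δ) :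
    x' ^ b - x ^ b ≤ b * δ ^ (b - 1) * (x' - x) := by
  have hK : ∀ u ∈ Set.Icc x x', ‖b * u ^ (b-1)‖ ≤ b * δ ^ (b - 1) := by
    intro u hu
    have hu0 : 0 < u := lt_of_lt_of_le hx hu.1
    have huδ : u ≤ δ := le_trans hu.2 hx'δ
    rw [Real.norm_eq_abs, abs_of_nonneg (by positivity)]
    exact mul_le_mul_of_nonneg_left
      (Real.rpow_le_rpow hu0.le huδ (by linarith)) (by linarith)
  have hd : ∀ u ∈ Set.Icc x x', HasDerivWithinAt (fun v : ℝ => v ^ b)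
      (b * u ^ (b-1)) (Set.Icc x x') u := by
    intro u hu
    have hu0 : u ≠ 0 := ne_of_gt (lt_of_lt_of_le hx hu.1)
    have := Real.hasDerivAt_rpow_const (x := u) (p := b) (Or.inl hu0)
    exact this.hasDerivWithinAt
  have := (convex_Icc x x').norm_image_sub_le_of_norm_hasDerivWithin_le hd hK
    (Set.left_mem_Icc.mpr hxx') (Set.right_mem_Icc.mpr hxx')
  rw [Real.norm_eq_abs, Real.norm_eq_abs] at this
  calc x' ^ b - x ^ b ≤ |x' ^ b - x ^ b| := le_abs_self _
    _ ≤ b * δ ^ (b-1) * |x' - x| := this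
    _ = b * δ ^ (b-1) * (x' - x) := by rw [abs_of_nonneg (by linarith)]

lemma Gs_smul (k : ℕ) (r x y : ℝ) : Gs k (r*x) (r*y) = r^(k-1) * Gs k x y := by
  rw [Gs, Gs, Finset.mul_sum]
  apply Finset.sum_congr rfl
  intro i hi
  have hik : i + (k - 1 - i) = k - 1 := by have := Finset.mem_range.mp hi; omega
  rw [mul_pow, mul_pow]
  ring_nf
  rw [mul_assoc, mul_assoc, ← mul_assoc (r^i), ← pow_add, hik]
  ring

lemma linear_bound_contradiction {E D T : ℝ} (hE : 0 < E)
    (h : ∀ t : ℝ, T ≤ t → E * t ≤ D) : False := by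
  have h1 : T ≤ max T (D / E) + 1 := by have := le_max_left T (D/E); linarith
  have h2 := h _ h1
  have h3 : D / E < max T (D/E) + 1 := by have := le_max_right T (D/E); linarith
  rw [div_lt_iff₀ hE] at h3
  nlinarith

noncomputable def CT (P : Polynomial ℝ) : ℝ := ∑ k ∈ Finset.range P.natDegree, |P.coeff k|

lemma CT_nonneg (P : Polynomial ℝ) : 0 ≤ CT P := Finset.sum_nonneg fun k _ => abs_nonneg _

lemma abs_eval_sub_top_le (P : Polynomial ℝ) {y R : ℝ} (hR : 1 ≤ R) (hy : |y| ≤ R) :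
    |P.eval y - P.leadingCoeff * y ^ P.natDegree| ≤ CT P * R ^ (P.natDegree - 1) := by
  have hR0 : 0 ≤ R := le_trans zero_le_one hR
  have he : P.eval y - P.leadingCoeff * y ^ P.natDegree
      = ∑ k ∈ Finset.range P.natDegree, P.coeff k * y ^ k := by
    rw [P.eval_eq_sum_range y, Finset.sum_range_succ, Polynomial.coeff_natDegree]
    ring
  rw [he, CT, Finset.sum_mul]
  refine le_trans (Finset.abs_sum_le_sum_abs _ _) (Finset.sum_le_sum ?_)
  intro k hk
  rw [abs_mul, abs_pow]
  apply mul_le_mul_of_nonneg_left _ (abs_nonneg _)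
  calc |y| ^ k ≤ R ^ k := pow_le_pow_left₀ (abs_nonneg y) hy k
    _ ≤ R ^ (P.natDegree - 1) :=
        pow_le_pow_right₀ hR (by have := Finset.mem_range.mp hk; omega)



set_option maxHeartbeats 1600000 in
lemma phi_structure_mono (p q : Polynomial ℝ) (hp : 0 < p.natDegree) (hq : 0 < q.natDegree)
    (φ : ℝ → ℝ) (A B : ℝ) (hA : 0 < A) (hB : 0 < B)
    (hlow : ∀ s t : ℝ, A * |s - t| ≤ |φ s - φ t|)
    (hup : ∀ s t : ℝ, |φ s - φ t| ≤ B * |s - t|)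
    (hmono : StrictMono φ)
    (h : ∀ t : ℝ, q.eval (φ t) = p.eval t) :
    ∃ c K C8 : ℝ, 0 < c ∧ 0 ≤ K ∧ 0 ≤ C8 ∧ (∀ t, |φ t - c * t| ≤ K) ∧
      (∀ a b : ℝ, (1 + min |a| |b|) * |(φ a - c * a) - (φ b - c * b)| ≤ C8 * |a - b|) := by
  -- growth bounds
  have hg1 : ∀ t : ℝ, |φ t| ≤ B * |t| + |φ 0| := by
    intro t
    have := hup t 0
    rw [sub_zero] at this
    calc |φ t| = |(φ t - φ 0) + φ 0| := by ring_nf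
      _ ≤ |φ t - φ 0| + |φ 0| := abs_add_le _ _
      _ ≤ B * |t| + |φ 0| := by linarith
  have hg3 : ∀ t : ℝ, 0 ≤ t → φ 0 + A * t ≤ φ t := by
    intro t ht
    have h1 := hlow t 0
    rw [sub_zero] at h1
    rcases eq_or_lt_of_le ht with rfl | ht'
    · simp
    · have h2 : φ 0 < φ t := hmono ht'
      rw [abs_of_nonneg ht, abs_of_pos (by linarith : (0:ℝ) < φ t - φ 0)] at h1
      linarith
  have hg4 : ∀ t : ℝ, t ≤ 0 → φ t ≤ φ 0 + A * t := by
    intro t ht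
    have h1 := hlow t 0
    rw [sub_zero] at h1
    rcases eq_or_lt_of_le ht with rfl | ht'
    · simp
    · have h2 : φ t < φ 0 := hmono ht'
      rw [abs_of_nonpos ht, abs_of_neg (by linarith : φ t - φ 0 < 0)] at h1
      linarith
  have hq0 : q ≠ 0 := fun h0 => by simp [h0] at hq
  have hp0 : p ≠ 0 := fun h0 => by simp [h0] at hp
  set n := q.natDegree with hn
  set m := p.natDegree with hm
  set aq := q.leadingCoeff with haqdef
  set ap := p.leadingCoeff with hapdef
  have haq : aq ≠ 0 := Polynomial.leadingCoeff_ne_zero.mpr hq0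
  have hap : ap ≠ 0 := Polynomial.leadingCoeff_ne_zero.mpr hp0
  set β₀ : ℝ := B + |φ 0| + 1 with hβ₀def
  have hβ₀ : 1 ≤ β₀ := by have := abs_nonneg (φ 0); linarith
  have hβ₀0 : 0 < β₀ := by linarith
  -- the master bound
  set N := max n m with hN
  set C1 : ℝ := (CT q + CT p) * β₀ ^ (N - 1) with hC1def
  have hC1 : 0 ≤ C1 := mul_nonneg (by linarith [CT_nonneg q, CT_nonneg p]) (by positivity)
  have hmaster : ∀ t : ℝ, 1 ≤ |t| → |aq * φ t ^ n - ap * t ^ m| ≤ C1 * |t| ^ (N - 1) := by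
    intro t ht
    have ht0 : 0 ≤ |t| := abs_nonneg t
    set R := β₀ * |t| with hRdef
    have htR : |t| ≤ R := le_mul_of_one_le_left ht0 hβ₀
    have h1R : 1 ≤ R := le_trans ht htR
    have hφR : |φ t| ≤ R := by
      calc |φ t| ≤ B * |t| + |φ 0| := hg1 t
        _ ≤ R := by
          rw [hRdef, hβ₀def]
          nlinarith [mul_le_mul_of_nonneg_left ht (abs_nonneg (φ 0)), hB, ht]
    have e1 := abs_eval_sub_top_le q h1R hφR
    have e2 := abs_eval_sub_top_le p h1R htR
    rw [h t] at e1
    have e3 : |aq * φ t ^ n - ap * t ^ m| ≤ (CT q + CT p) * R ^ (N - 1) := by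
      have hs1 : R ^ (n - 1) ≤ R ^ (N - 1) := pow_le_pow_right₀ h1R (by omega)
      have hs2 : R ^ (m - 1) ≤ R ^ (N - 1) := pow_le_pow_right₀ h1R (by omega)
      have e4 : |aq * φ t ^ n - ap * t ^ m| ≤
          |p.eval t - aq * φ t ^ n| + |p.eval t - ap * t ^ m| := by
        rw [show aq * φ t ^ n - ap * t ^ m =
          -((p.eval t - aq * φ t ^ n) - (p.eval t - ap * t ^ m)) by ring, abs_neg]
        exact abs_sub _ _
      have hCTq := CT_nonneg q
      have hCTp := CT_nonneg p
      nlinarith [e1, e2, e4]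
    calc |aq * φ t ^ n - ap * t ^ m| ≤ (CT q + CT p) * R ^ (N - 1) := e3
      _ = C1 * |t| ^ (N - 1) := by rw [hC1def, hRdef, mul_pow]; ring
  -- degree equality
  have hdeg : m = n := by
    by_contra hne
    rcases Nat.lt_or_ge m n with hlt | hge
    · -- m < n : φ growth too strong
      have hE : (0:ℝ) < |aq| * (A/2) ^ n := by positivity
      apply linear_bound_contradiction hE (D := |ap| + C1)
        (T := max 1 (2 * |φ 0| / A))
      intro t htT
      have ht1 : (1:ℝ) ≤ t := le_trans (le_max_left _ _) htT
      have ht0 : (0:ℝ) < t := by linarith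
      have htabs : |t| = t := abs_of_pos ht0
      have htA : 2 * |φ 0| / A ≤ t := le_trans (le_max_right _ _) htT
      have hφlow : A / 2 * t ≤ |φ t| := by
        have h1 := hg3 t (by linarith)
        have h2 : A * t - |φ 0| ≤ φ t := by
          have : φ 0 ≥ -|φ 0| := neg_abs_le _
          linarith
        have h3 : |φ 0| ≤ A * t / 2 := by
          rw [div_le_iff₀ hA] at htA
          linarith [htA]
        calc A / 2 * t ≤ A * t - |φ 0| := by linarith
          _ ≤ φ t := h2
          _ ≤ |φ t| := le_abs_self _
      have hNm : N = n := by omega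
      have hmas := hmaster t (by rw [htabs]; exact ht1)
      rw [htabs, hNm] at hmas
      -- |aq| * (A/2 t)^n ≤ |aq * φ t ^ n| ≤ |ap| t^m + C1 t^{n-1}
      have k1 : |aq| * ((A/2) ^ n * t ^ n) ≤ |aq| * |φ t| ^ n := by
        apply mul_le_mul_of_nonneg_left _ (abs_nonneg aq)
        rw [← mul_pow]
        exact pow_le_pow_left₀ (by positivity) hφlow n
      have k2 : |aq| * |φ t| ^ n ≤ |ap| * t ^ m + C1 * t ^ (n-1) := by
        have : |aq * φ t ^ n| ≤ |ap * t ^ m| + C1 * t ^ (n-1) := by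
          have := abs_sub_abs_le_abs_sub (aq * φ t ^ n) (ap * t ^ m)
          linarith [hmas]
        rw [abs_mul, abs_mul, abs_pow, abs_pow, htabs] at this
        linarith
      have k3 : |ap| * t ^ m + C1 * t ^ (n-1) ≤ (|ap| + C1) * t ^ (n-1) := by
        have : t ^ m ≤ t ^ (n-1) := pow_le_pow_right₀ ht1 (by omega)
        nlinarith [abs_nonneg ap, hC1, pow_pos ht0 (n-1)]
      have k4 : t ^ n = t ^ (n-1) * t := by
        rw [← pow_succ]; congr 1; omega
      have k5 : (|aq| * (A/2) ^ n * t) * t ^ (n-1) ≤ (|ap| + C1) * t ^ (n-1) := by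
        calc (|aq| * (A/2) ^ n * t) * t ^ (n-1) = |aq| * ((A/2) ^ n * t ^ n) := by
              rw [k4]; ring
          _ ≤ (|ap| + C1) * t ^ (n-1) := le_trans k1 (le_trans k2 k3)
      exact le_of_mul_le_mul_right k5 (pow_pos ht0 _)
    · -- n < m : p growth too strong
      have hnm : n < m := by omega
      have hE : (0:ℝ) < |ap| := abs_pos.mpr hap
      apply linear_bound_contradiction hE (D := |aq| * β₀ ^ n + C1) (T := 1)
      intro t ht1
      have ht0 : (0:ℝ) < t := by linarith
      have htabs : |t| = t := abs_of_pos ht0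
      have hNm : N = m := by omega
      have hmas := hmaster t (by rw [htabs]; exact ht1)
      rw [htabs, hNm] at hmas
      have hφR : |φ t| ≤ β₀ * t := by
        calc |φ t| ≤ B * |t| + |φ 0| := hg1 t
          _ ≤ β₀ * t := by
            rw [htabs, hβ₀def]
            nlinarith [mul_le_mul_of_nonneg_left ht1 (abs_nonneg (φ 0)), hB]
      have k2 : |ap| * t ^ m ≤ |aq| * (β₀ * t) ^ n + C1 * t ^ (m-1) := by
        have : |ap * t ^ m| ≤ |aq * φ t ^ n| + C1 * t ^ (m-1) := by
          have := abs_sub_abs_le_abs_sub (ap * t ^ m) (aq * φ t ^ n)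
          rw [abs_sub_comm] at hmas
          linarith [hmas]
        rw [abs_mul, abs_mul, abs_pow, abs_pow, htabs] at this
        calc |ap| * t ^ m ≤ |aq| * |φ t| ^ n + C1 * t ^ (m-1) := this
          _ ≤ |aq| * (β₀ * t) ^ n + C1 * t ^ (m-1) := by
            have := pow_le_pow_left₀ (abs_nonneg (φ t)) hφR n
            nlinarith [abs_nonneg aq]
      have k3 : |aq| * (β₀ * t) ^ n + C1 * t ^ (m-1) ≤ (|aq| * β₀ ^ n + C1) * t ^ (m-1) := by
        have h4 : t ^ n ≤ t ^ (m-1) := pow_le_pow_right₀ ht1 (by omega)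
        have h5 : |aq| * β₀ ^ n * t ^ n ≤ |aq| * β₀ ^ n * t ^ (m-1) :=
          mul_le_mul_of_nonneg_left h4 (mul_nonneg (abs_nonneg aq) (by positivity))
        rw [mul_pow]
        linarith [h5]
      have k4 : t ^ m = t ^ (m-1) * t := by
        rw [← pow_succ]; congr 1; omega
      have k5 : (|ap| * t) * t ^ (m-1) ≤ (|aq| * β₀ ^ n + C1) * t ^ (m-1) := by
        calc (|ap| * t) * t ^ (m-1) = |ap| * t ^ m := by rw [k4]; ring
          _ ≤ (|aq| * β₀ ^ n + C1) * t ^ (m-1) := le_trans k2 k3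
      exact le_of_mul_le_mul_right k5 (pow_pos ht0 _)
  -- now m = n
  rw [← hdeg] at hmaster
  have hNn : N = m := by rw [hN, ← hdeg, max_self]
  rw [hNn] at hmaster
  set γ : ℝ := ap / aq with hγdef
  have hγ0 : γ ≠ 0 := div_ne_zero hap haq
  set C2 : ℝ := C1 / |aq| with hC2def
  have hC2 : 0 ≤ C2 := div_nonneg hC1 (abs_nonneg aq)
  have haq' : (0:ℝ) < |aq| := abs_pos.mpr haq
  have hsest : ∀ t : ℝ, 1 ≤ |t| → |t| * |(φ t / t) ^ m - γ| ≤ C2 := by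
    intro t ht
    have ht0 : t ≠ 0 := by intro h0; rw [h0] at ht; simp at ht; linarith
    have htpos : 0 < |t| := by linarith
    have hiden : (φ t / t) ^ m - γ = (aq * φ t ^ m - ap * t ^ m) / (aq * t ^ m) := by
      field_simp
      ring_nf
      have h1 : t ^ m * t⁻¹ ^ m = 1 := by rw [← mul_pow, mul_inv_cancel₀ ht0, one_pow]
      have h2 : γ * aq = ap := div_mul_cancel₀ _ haq
      linear_combination (φ t ^ m * aq) * h1 - t ^ m * h2
    rw [hiden, abs_div, abs_mul, abs_pow]
    rw [mul_div_assoc', div_le_iff₀ (by positivity)]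
    have hmas := hmaster t ht
    have htm : |t| ^ m = |t| ^ (m-1) * |t| := by
      rw [← pow_succ]; congr 1; omega
    calc |t| * |aq * φ t ^ m - ap * t ^ m| ≤ |t| * (C1 * |t| ^ (m-1)) :=
          mul_le_mul_of_nonneg_left hmas (abs_nonneg t)
      _ = C2 * (|aq| * |t| ^ m) := by
          rw [hC2def, htm, div_mul_eq_mul_div, mul_div_assoc]
          rw [mul_div_cancel_left₀ _ (ne_of_gt haq')]
          ring
  set ρ : ℝ := |γ| ^ ((m:ℝ)⁻¹) with hρdef
  have hγabs : (0:ℝ) < |γ| := abs_pos.mpr hγ0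
  have hρpos : 0 < ρ := Real.rpow_pos_of_pos hγabs _
  have hρm : ρ ^ m = |γ| := Real.rpow_inv_natCast_pow (abs_nonneg γ) (by omega)
  set T₁ : ℝ := max 1 ((|φ 0| + 1) / A) with hT₁def
  have hT₁1 : (1:ℝ) ≤ T₁ := le_max_left _ _
  have hspos : ∀ t : ℝ, T₁ ≤ |t| → 0 < φ t / t := by
    intro t ht
    have hAT : |φ 0| + 1 ≤ A * T₁ := by
      rw [← div_le_iff₀' hA]
      exact le_max_right _ _
    rcases lt_trichotomy t 0 with htneg | rfl | htpos
    · have habs : |t| = -t := abs_of_neg htneg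
      have h1 := hg4 t (le_of_lt htneg)
      have h2 : φ t ≤ |φ 0| + A * t := by
        have := le_abs_self (φ 0); linarith
      have h3 : A * t ≤ -(A * T₁) := by
        rw [habs] at ht
        nlinarith
      have h4 : φ t < 0 := by linarith
      exact div_pos_of_neg_of_neg h4 htneg
    · simp at ht; linarith
    · have habs : |t| = t := abs_of_pos htpos
      have h1 := hg3 t (le_of_lt htpos)
      have h2 : -|φ 0| ≤ φ 0 := neg_abs_le _
      have h3 : A * T₁ ≤ A * t := by rw [habs] at ht; nlinarith
      have h4 : 0 < φ t := by linarith
      exact div_pos h4 htpos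
  set C3 : ℝ := C2 / ρ ^ (m-1) with hC3def
  have hρm1 : (0:ℝ) < ρ ^ (m-1) := pow_pos hρpos _
  have hC3 : 0 ≤ C3 := div_nonneg hC2 (le_of_lt hρm1)
  have habs_s : ∀ t : ℝ, T₁ ≤ |t| → |t| * |φ t / t - ρ| ≤ C3 := by
    intro t ht
    have ht1 : 1 ≤ |t| := le_trans hT₁1 ht
    have hs := hspos t ht
    set s := φ t / t with hsdef
    have hfac : s ^ m - ρ ^ m = (s - ρ) * Gs m s ρ := (sub_mul_Gs m s ρ).symm
    have hGsge : ρ ^ (m-1) ≤ Gs m s ρ := by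
      calc ρ ^ (m-1) ≤ max s ρ ^ (m-1) := pow_le_pow_left₀ (le_of_lt hρpos) (le_max_right _ _) _
        _ ≤ Gs m s ρ := Gs_ge_of_pos (by omega) (le_of_lt hs) (le_of_lt hρpos)
    have h1 : |s ^ m - ρ ^ m| ≤ |s ^ m - γ| := by
      have h2 : |s ^ m| = s ^ m := abs_of_pos (pow_pos hs m)
      have h3 := abs_abs_sub_abs_le_abs_sub (s ^ m) γ
      rw [h2] at h3
      rw [hρm]
      exact h3
    have h3 : |s - ρ| * ρ ^ (m-1) ≤ |s ^ m - ρ ^ m| := by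
      rw [hfac, abs_mul]
      apply mul_le_mul_of_nonneg_left _ (abs_nonneg _)
      calc ρ ^ (m-1) ≤ Gs m s ρ := hGsge
        _ ≤ |Gs m s ρ| := le_abs_self _
    have h4 := hsest t ht1
    have h5 : |t| * (|s - ρ| * ρ ^ (m-1)) ≤ C3 * ρ ^ (m-1) := by
      calc |t| * (|s - ρ| * ρ ^ (m-1)) ≤ |t| * |s ^ m - γ| := by
            apply mul_le_mul_of_nonneg_left _ (abs_nonneg t)
            exact le_trans h3 h1
        _ ≤ C2 := h4
        _ = C3 * ρ ^ (m-1) := by rw [hC3def, div_mul_cancel₀ _ (ne_of_gt hρm1)]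
    have h6 : (|t| * |s - ρ|) * ρ ^ (m-1) ≤ C3 * ρ ^ (m-1) := by
      rw [mul_assoc]; exact h5
    exact le_of_mul_le_mul_right h6 hρm1
  -- γ > 0, and c := ρ satisfies c ^ m = γ
  have hγpos : 0 < γ := by
    rcases lt_trichotomy γ 0 with hneg | hzero | hpos
    · exfalso
      apply linear_bound_contradiction (E := -γ) (D := C2) (T := T₁) (by linarith)
      intro t ht
      have habs : |t| = t := abs_of_pos (by linarith : (0:ℝ) < t)
      have hs := hspos t (by rw [habs]; exact ht)
      have h4 := hsest t (by rw [habs]; linarith)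
      have h5 : -γ ≤ |(φ t / t) ^ m - γ| := by
        have := pow_pos hs m
        rw [abs_of_pos (by linarith : (0:ℝ) < (φ t / t) ^ m - γ)]
        linarith
      rw [habs] at h4
      nlinarith
    · exact absurd hzero hγ0
    · exact hpos
  have hcm : ρ ^ m = γ := by rw [hρm, abs_of_pos hγpos]
  have hapeq : ap = ρ ^ m * aq := by rw [hcm, hγdef, div_mul_cancel₀ _ haq]
  -- global bound K for ζ t = φ t - ρ t
  set K : ℝ := max C3 ((B + ρ) * T₁ + |φ 0|) with hKdef
  have hK0 : 0 ≤ K := le_trans hC3 (le_max_left _ _)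
  have hK : ∀ t : ℝ, |φ t - ρ * t| ≤ K := by
    intro t
    rcases le_or_gt T₁ |t| with ht | ht
    · have h1 := habs_s t ht
      have ht0 : t ≠ 0 := by
        intro h0; rw [h0] at ht; simp at ht; linarith
      have h2 : |t| * |φ t / t - ρ| = |φ t - ρ * t| := by
        rw [← abs_mul]; congr 1; field_simp
      rw [h2] at h1
      exact le_trans h1 (le_max_left _ _)
    · have h1 := hg1 t
      have h2 : |φ t - ρ * t| ≤ |φ t| + ρ * |t| := by
        calc |φ t - ρ * t| ≤ |φ t| + |ρ * t| := abs_sub _ _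
          _ = |φ t| + ρ * |t| := by rw [abs_mul, abs_of_pos hρpos]
      calc |φ t - ρ * t| ≤ B * |t| + |φ 0| + ρ * |t| := by linarith
        _ ≤ (B + ρ) * T₁ + |φ 0| := by nlinarith [abs_nonneg t]
        _ ≤ K := le_max_right _ _
  -- degree bookkeeping
  have hqdeg : q.natDegree = m := by omega
  have hpdeg : p.natDegree = m := by omega
  have hqc : q.coeff m = aq := by rw [← hqdeg]; exact q.coeff_natDegree
  have hpc : p.coeff m = ap := by rw [← hpdeg]; exact p.coeff_natDegree
  -- constants for the divided-difference estimate
  set β₁ : ℝ := β₀ + ρ with hβ₁def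
  have hβ₁ : 1 ≤ β₁ := by linarith
  have hβ₁0 : 0 < β₁ := by linarith
  set e₂ : ℝ := |aq| * (ρ/2) ^ (m-1) with he₂def
  have he₂ : 0 < e₂ := by positivity
  set e₁ : ℝ := CP q * β₁ ^ (m-1) with he₁def
  have he₁ : 0 ≤ e₁ := mul_nonneg (CP_nonneg q) (by positivity)
  set e₃ : ℝ := CP p * β₁ ^ (m-1) + ρ * (CP q * β₁ ^ (m-1))
      + ρ * |aq| * ((m:ℝ) * ((m:ℝ) * β₁ ^ (m-1) * (2*K))) with he₃def
  have he₃ : 0 ≤ e₃ := by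
    have u1 : 0 ≤ CP p * β₁ ^ (m-1) := mul_nonneg (CP_nonneg p) (by positivity)
    have u2 : 0 ≤ ρ * (CP q * β₁ ^ (m-1)) :=
      mul_nonneg (le_of_lt hρpos) (mul_nonneg (CP_nonneg q) (by positivity))
    have u3 : 0 ≤ ρ * |aq| * ((m:ℝ) * ((m:ℝ) * β₁ ^ (m-1) * (2*K))) :=
      mul_nonneg (mul_nonneg (le_of_lt hρpos) (abs_nonneg aq))
        (mul_nonneg (Nat.cast_nonneg m)
          (mul_nonneg (mul_nonneg (Nat.cast_nonneg m) (by positivity)) (by linarith only [hK0])))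
    rw [he₃def]; linarith only [u1, u2, u3]
  set e₄ : ℝ := 2 * e₃ / e₂ with he₄def
  have he₄ : 0 ≤ e₄ := by positivity
  set T₅ : ℝ := max T₁ (max 1 (max (2*K/ρ) (2*e₁/e₂))) with hT₅def
  have hT₅1 : (1:ℝ) ≤ T₅ := le_trans (le_max_left 1 _) (le_max_right T₁ _)
  have hT₅0 : (0:ℝ) ≤ T₅ := by linarith
  have hmain : ∀ a b : ℝ, T₅ ≤ |a| → T₅ ≤ |b| → 0 < a * b →
      max |a| |b| * |(φ a - ρ * a) - (φ b - ρ * b)| ≤ e₄ * |a - b| := by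
    intro a b ha hb hab
    set M : ℝ := max |a| |b| with hMdef
    have hM1 : 1 ≤ M := le_trans hT₅1 (le_trans ha (le_max_left _ _))
    have hM0 : 0 < M := by linarith only [hM1]
    have haM : |a| ≤ M := le_max_left _ _
    have hbM : |b| ≤ M := le_max_right _ _
    set R : ℝ := β₁ * M with hRdef
    have hR1 : 1 ≤ R := by
      have u0 := mul_le_mul hβ₁ hM1 zero_le_one (by linarith only [hβ₁0] : (0:ℝ) ≤ β₁)
      rw [mul_one] at u0
      rw [hRdef]; exact u0
    have hMR : M ≤ R := le_mul_of_one_le_left (by linarith) hβ₁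
    have haR : |a| ≤ R := le_trans haM hMR
    have hbR : |b| ≤ R := le_trans hbM hMR
    have hφbd : ∀ t : ℝ, |t| ≤ M → |φ t| ≤ R := by
      intro t ht
      calc |φ t| ≤ B * |t| + |φ 0| := hg1 t
        _ ≤ B * M + |φ 0| * M := by
            have u1 : B * |t| ≤ B * M := mul_le_mul_of_nonneg_left ht (le_of_lt hB)
            have u2 := le_mul_of_one_le_right (abs_nonneg (φ 0)) hM1
            linarith only [u1, u2]
        _ ≤ R := by
            rw [hRdef, hβ₁def, hβ₀def]
            have u3 : 0 < (1 + ρ) * M := mul_pos (by linarith only [hρpos]) hM0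
            have u4 : B * M + |φ 0| * M + (1 + ρ) * M = (B + |φ 0| + 1 + ρ) * M := by ring
            linarith only [u3, u4]
    have hφaR : |φ a| ≤ R := hφbd a haM
    have hφbR : |φ b| ≤ R := hφbd b hbM
    have hρaR : |ρ * a| ≤ R := by
      rw [abs_mul, abs_of_pos hρpos, hRdef, hβ₁def]
      have u1 : ρ * |a| ≤ ρ * M := mul_le_mul_of_nonneg_left haM (le_of_lt hρpos)
      have u2 : 0 < β₀ * M := mul_pos hβ₀0 hM0
      linarith only [u1, u2]
    have hρbR : |ρ * b| ≤ R := by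
      rw [abs_mul, abs_of_pos hρpos, hRdef, hβ₁def]
      have u1 : ρ * |b| ≤ ρ * M := mul_le_mul_of_nonneg_left hbM (le_of_lt hρpos)
      have u2 : 0 < β₀ * M := mul_pos hβ₀0 hM0
      linarith only [u1, u2]
    -- signs and lower bound for φ
    have hKρ : ∀ t : ℝ, T₅ ≤ |t| → ρ/2 * |t| ≤ |φ t| ∧ 0 < φ t * t := by
      intro t ht
      have h2K : 2*K/ρ ≤ |t| :=
        le_trans (le_trans (le_max_left _ _) (le_max_right 1 _)) (le_trans (le_max_right T₁ _) ht)
      have hKt : K ≤ ρ/2 * |t| := by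
        rw [div_le_iff₀ hρpos] at h2K
        linarith only [h2K]
      have h1 := hK t
      have ht0 : t ≠ 0 := by
        intro h0; rw [h0] at ht; simp at ht; linarith only [ht, hT₅1]
      rcases lt_or_gt_of_ne ht0 with htneg | htpos
      · have habs : |t| = -t := abs_of_neg htneg
        have h2 : φ t ≤ ρ * t + K := by
          have u := abs_le.mp h1; linarith only [u.2]
        have h3 : φ t ≤ ρ/2 * t := by
          rw [habs] at hKt; linarith only [h2, hKt]
        have h4 : φ t < 0 := by
          have u : ρ/2 * t < 0 := mul_neg_of_pos_of_neg (by linarith only [hρpos]) htneg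
          linarith only [u, h3]
        constructor
        · rw [abs_of_neg h4, habs]; linarith only [h3]
        · exact mul_pos_of_neg_of_neg h4 htneg
      · have habs : |t| = t := abs_of_pos htpos
        have h2 : ρ * t - K ≤ φ t := by
          have u := abs_le.mp h1; linarith only [u.1]
        have h3 : ρ/2 * t ≤ φ t := by
          rw [habs] at hKt; linarith only [h2, hKt]
        have h4 : 0 < φ t := by
          have u : 0 < ρ/2 * t := mul_pos (by linarith only [hρpos]) htpos
          linarith only [u, h3]
        constructor
        · rw [abs_of_pos h4, habs]; linarith only [h3]
        · exact mul_pos h4 htpos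
    have hφa := hKρ a ha
    have hφb := hKρ b hb
    have hφsign : 0 < φ a * φ b := by
      have hsgn : ∀ t : ℝ, 0 < φ t * t → ((0 < t → 0 < φ t) ∧ (t < 0 → φ t < 0)) := by
        intro t hpt
        rcases mul_pos_iff.mp hpt with ⟨u1, u2⟩ | ⟨u1, u2⟩
        · exact ⟨fun _ => u1, fun hc => absurd u2 (not_lt.mpr (le_of_lt hc))⟩
        · exact ⟨fun hc => absurd u2 (not_lt.mpr (le_of_lt hc)), fun _ => u1⟩
      rcases mul_pos_iff.mp hab with ⟨ha', hb'⟩ | ⟨ha', hb'⟩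
      · exact mul_pos ((hsgn a hφa.2).1 ha') ((hsgn b hφb.2).1 hb')
      · exact mul_pos_of_neg_of_neg ((hsgn a hφa.2).2 ha') ((hsgn b hφb.2).2 hb')
    have hφmax : ρ/2 * M ≤ max |φ a| |φ b| := by
      rcases max_cases |a| |b| with ⟨hm1, _⟩ | ⟨hm1, _⟩
      · rw [← hMdef] at hm1
        calc ρ/2 * M = ρ/2 * |a| := by rw [hm1]
          _ ≤ |φ a| := hφa.1
          _ ≤ max |φ a| |φ b| := le_max_left _ _
      · rw [← hMdef] at hm1
        calc ρ/2 * M = ρ/2 * |b| := by rw [hm1]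
          _ ≤ |φ b| := hφb.1
          _ ≤ max |φ a| |φ b| := le_max_right _ _
    set Dq : ℝ := DD q (φ a) (φ b) with hDqdef
    set Dp : ℝ := DD p a b with hDpdef
    -- the key identity
    have hid : ((φ a - ρ * a) - (φ b - ρ * b)) * Dq = (a - b) * (Dp - ρ * Dq) := by
      have h1 : (φ a - φ b) * Dq = (a - b) * Dp := by
        rw [hDqdef, hDpdef, ← eval_sub_eval, ← eval_sub_eval, h a, h b]
      linear_combination h1
    -- lower bound for M * |Dq|
    have hlow2 : e₂/2 * (M ^ (m-1) * M) ≤ M * |Dq| := by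
      have hGs : (ρ/2 * M) ^ (m-1) ≤ |Gs m (φ a) (φ b)| := by
        have h1 := abs_Gs_ge (k := m) (by omega) hφsign
        calc (ρ/2 * M) ^ (m-1) ≤ max |φ a| |φ b| ^ (m-1) :=
              pow_le_pow_left₀ (by positivity) hφmax _
          _ ≤ |Gs m (φ a) (φ b)| := h1
      have htop : e₂ * (M ^ (m-1) * M) ≤ M * |aq * Gs m (φ a) (φ b)| := by
        rw [abs_mul]
        calc e₂ * (M ^ (m-1) * M) = M * (|aq| * ((ρ/2)^(m-1) * M^(m-1))) := by
              rw [he₂def]; ring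
          _ = M * (|aq| * (ρ/2 * M)^(m-1)) := by rw [mul_pow]
          _ ≤ M * (|aq| * |Gs m (φ a) (φ b)|) := by
              apply mul_le_mul_of_nonneg_left _ (le_of_lt hM0)
              exact mul_le_mul_of_nonneg_left hGs (abs_nonneg aq)
      have htail : M * |Dq - aq * Gs m (φ a) (φ b)| ≤ e₁ * M ^ (m-1) := by
        have h1 := mul_abs_DD_sub_top_le q hR1 hφaR hφbR
        rw [hqdeg, hqc] at h1
        calc M * |Dq - aq * Gs m (φ a) (φ b)| ≤ R * |Dq - aq * Gs m (φ a) (φ b)| :=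
              mul_le_mul_of_nonneg_right hMR (abs_nonneg _)
          _ ≤ CP q * R ^ (m-1) := h1
          _ = e₁ * M ^ (m-1) := by rw [he₁def, hRdef, mul_pow]; ring
      have habs1 : |aq * Gs m (φ a) (φ b)| - |Dq - aq * Gs m (φ a) (φ b)| ≤ |Dq| := by
        have := abs_sub_abs_le_abs_sub (aq * Gs m (φ a) (φ b)) (aq * Gs m (φ a) (φ b) - Dq)
        have h2 : |aq * Gs m (φ a) (φ b) - Dq| = |Dq - aq * Gs m (φ a) (φ b)| := abs_sub_comm _ _
        simp only [sub_sub_cancel] at this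
        linarith only [this, h2]
      have hM2 : 2*e₁/e₂ ≤ M :=
        le_trans (le_trans (le_max_right (2*K/ρ) _) (le_trans (le_max_right 1 _) (le_max_right T₁ _))) (le_trans ha haM)
      have hM3 : e₁ ≤ e₂/2 * M := by
        rw [div_le_iff₀ he₂] at hM2
        linarith only [hM2]
      have h5 : M * |Dq| ≥ e₂ * (M^(m-1) * M) - e₁ * M^(m-1) := by
        have h6 := mul_le_mul_of_nonneg_left habs1 (le_of_lt hM0)
        linarith only [h6, htop, htail]
      have h7 : e₂/2 * (M^(m-1) * M) ≤ e₂ * (M^(m-1) * M) - e₁ * M^(m-1) := by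
        have h8 : (0:ℝ) < M^(m-1) := pow_pos hM0 _
        have h9 := mul_le_mul_of_nonneg_right hM3 (le_of_lt h8)
        linarith only [h9]
      linarith only [h5, h7]
    -- upper bound for M * |Dp - ρ Dq|
    have hup2 : M * |Dp - ρ * Dq| ≤ e₃ * M ^ (m-1) := by
      have hGseq : ap * Gs m a b = ρ * aq * Gs m (ρ*a) (ρ*b) := by
        rw [Gs_smul, hapeq]
        have h9 : ρ * ρ^(m-1) = ρ^m := by rw [← pow_succ']; congr 1; omega
        linear_combination (-(aq * Gs m a b)) * h9
      have hdecomp : Dp - ρ * Dq = (Dp - ap * Gs m a b) - ρ*(Dq - aq * Gs m (φ a) (φ b))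
          + ρ * aq * (Gs m (ρ*a) (ρ*b) - Gs m (φ a) (φ b)) := by
        linear_combination hGseq
      have hf1 : M * |Dp - ap * Gs m a b| ≤ CP p * β₁^(m-1) * M^(m-1) := by
        have h1 := mul_abs_DD_sub_top_le p hR1 haR hbR
        rw [hpdeg, hpc] at h1
        calc M * |Dp - ap * Gs m a b| ≤ R * |Dp - ap * Gs m a b| :=
              mul_le_mul_of_nonneg_right hMR (abs_nonneg _)
          _ ≤ CP p * R ^ (m-1) := h1
          _ = CP p * β₁^(m-1) * M^(m-1) := by rw [hRdef, mul_pow]; ring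
      have hf2 : M * |Dq - aq * Gs m (φ a) (φ b)| ≤ CP q * β₁^(m-1) * M^(m-1) := by
        have h1 := mul_abs_DD_sub_top_le q hR1 hφaR hφbR
        rw [hqdeg, hqc] at h1
        calc M * |Dq - aq * Gs m (φ a) (φ b)| ≤ R * |Dq - aq * Gs m (φ a) (φ b)| :=
              mul_le_mul_of_nonneg_right hMR (abs_nonneg _)
          _ ≤ CP q * R ^ (m-1) := h1
          _ = CP q * β₁^(m-1) * M^(m-1) := by rw [hRdef, mul_pow]; ring
      have hf3 : M * |Gs m (ρ*a) (ρ*b) - Gs m (φ a) (φ b)| ≤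
          (m:ℝ) * ((m:ℝ) * β₁^(m-1) * (2*K)) * M^(m-1) := by
        have h1 := mul_Gs_diff (k := m) hR1 hρaR hρbR hφaR hφbR
        have h2 : |ρ*a - φ a| ≤ K := by rw [abs_sub_comm]; exact hK a
        have h3 : |ρ*b - φ b| ≤ K := by rw [abs_sub_comm]; exact hK b
        calc M * |Gs m (ρ*a) (ρ*b) - Gs m (φ a) (φ b)| ≤
            R * |Gs m (ρ*a) (ρ*b) - Gs m (φ a) (φ b)| :=
              mul_le_mul_of_nonneg_right hMR (abs_nonneg _)
          _ ≤ (m:ℝ) * ((m:ℝ) * R^(m-1) * (|ρ*a - φ a| + |ρ*b - φ b|)) := h1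
          _ ≤ (m:ℝ) * ((m:ℝ) * R^(m-1) * (2*K)) := by
              apply mul_le_mul_of_nonneg_left _ (Nat.cast_nonneg m)
              apply mul_le_mul_of_nonneg_left _ (by positivity)
              linarith
          _ = (m:ℝ) * ((m:ℝ) * β₁^(m-1) * (2*K)) * M^(m-1) := by
              rw [hRdef, mul_pow]; ring
      have htri : |Dp - ρ * Dq| ≤ |Dp - ap * Gs m a b| + ρ * |Dq - aq * Gs m (φ a) (φ b)|
          + ρ * |aq| * |Gs m (ρ*a) (ρ*b) - Gs m (φ a) (φ b)| := by
        rw [hdecomp]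
        refine le_trans (abs_add_le _ _) ?_
        have t1 := abs_sub (Dp - ap * Gs m a b) (ρ*(Dq - aq * Gs m (φ a) (φ b)))
        have t2 : |ρ*(Dq - aq * Gs m (φ a) (φ b))| = ρ * |Dq - aq * Gs m (φ a) (φ b)| := by
          rw [abs_mul, abs_of_pos hρpos]
        have t3 : |ρ * aq * (Gs m (ρ*a) (ρ*b) - Gs m (φ a) (φ b))| =
            ρ * |aq| * |Gs m (ρ*a) (ρ*b) - Gs m (φ a) (φ b)| := by
          rw [abs_mul, abs_mul, abs_of_pos hρpos]
        rw [t3]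
        have t4 : |Dp - ap * Gs m a b - ρ*(Dq - aq * Gs m (φ a) (φ b))| ≤
            |Dp - ap * Gs m a b| + ρ * |Dq - aq * Gs m (φ a) (φ b)| := by
          rw [← t2]; exact abs_sub _ _
        linarith only [t4]
      calc M * |Dp - ρ * Dq| ≤ M * |Dp - ap * Gs m a b|
            + ρ * (M * |Dq - aq * Gs m (φ a) (φ b)|)
            + ρ * |aq| * (M * |Gs m (ρ*a) (ρ*b) - Gs m (φ a) (φ b)|) := by
            have u1 := mul_le_mul_of_nonneg_left htri (le_of_lt hM0)
            linarith only [u1]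
        _ ≤ CP p * β₁^(m-1) * M^(m-1) + ρ * (CP q * β₁^(m-1) * M^(m-1))
            + ρ * |aq| * ((m:ℝ) * ((m:ℝ) * β₁^(m-1) * (2*K)) * M^(m-1)) := by
            have r2 := mul_le_mul_of_nonneg_left hf2 (le_of_lt hρpos)
            have r3 := mul_le_mul_of_nonneg_left hf3 (by positivity : (0:ℝ) ≤ ρ * |aq|)
            linarith only [hf1, r2, r3]
        _ = e₃ * M ^ (m-1) := by rw [he₃def]; ring
    -- combine
    have hMm1 : (0:ℝ) < M ^ (m-1) := pow_pos hM0 _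
    have k1 : |(φ a - ρ * a) - (φ b - ρ * b)| * |Dq| = |a - b| * |Dp - ρ * Dq| := by
      rw [← abs_mul, ← abs_mul, hid]
    have k2 : |(φ a - ρ * a) - (φ b - ρ * b)| * (e₂/2 * (M^(m-1) * M)) ≤
        |a - b| * (e₃ * M^(m-1)) := by
      calc |(φ a - ρ * a) - (φ b - ρ * b)| * (e₂/2 * (M^(m-1) * M)) ≤
          |(φ a - ρ * a) - (φ b - ρ * b)| * (M * |Dq|) :=
            mul_le_mul_of_nonneg_left hlow2 (abs_nonneg _)
        _ = |a - b| * (M * |Dp - ρ * Dq|) := by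
            rw [show |(φ a - ρ * a) - (φ b - ρ * b)| * (M * |Dq|) =
              M * (|(φ a - ρ * a) - (φ b - ρ * b)| * |Dq|) by ring, k1]; ring
        _ ≤ |a - b| * (e₃ * M^(m-1)) :=
            mul_le_mul_of_nonneg_left hup2 (abs_nonneg _)
    have k3 : (|(φ a - ρ * a) - (φ b - ρ * b)| * (e₂/2 * M)) * M^(m-1) ≤
        (|a - b| * e₃) * M^(m-1) := by
      calc (|(φ a - ρ * a) - (φ b - ρ * b)| * (e₂/2 * M)) * M^(m-1)
          = |(φ a - ρ * a) - (φ b - ρ * b)| * (e₂/2 * (M^(m-1) * M)) := by ring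
        _ ≤ |a - b| * (e₃ * M^(m-1)) := k2
        _ = (|a - b| * e₃) * M^(m-1) := by ring
    have k4 : |(φ a - ρ * a) - (φ b - ρ * b)| * (e₂/2 * M) ≤ |a - b| * e₃ :=
      le_of_mul_le_mul_right k3 hMm1
    have k5 : e₄ * (e₂/2) = e₃ := by
      rw [he₄def]; field_simp
    have k6 : (M * |(φ a - ρ * a) - (φ b - ρ * b)|) * (e₂/2) ≤ (e₄ * |a - b|) * (e₂/2) := by
      calc (M * |(φ a - ρ * a) - (φ b - ρ * b)|) * (e₂/2)
          = |(φ a - ρ * a) - (φ b - ρ * b)| * (e₂/2 * M) := by ring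
        _ ≤ |a - b| * e₃ := k4
        _ = (e₄ * |a - b|) * (e₂/2) := by rw [← k5]; ring
    exact le_of_mul_le_mul_right k6 (half_pos he₂)
  -- Lipschitz bound for ζ
  have hζLip : ∀ a b : ℝ, |(φ a - ρ * a) - (φ b - ρ * b)| ≤ (B + ρ) * |a - b| := by
    intro a b
    have h1 := hup a b
    calc |(φ a - ρ * a) - (φ b - ρ * b)| = |(φ a - φ b) - ρ * (a - b)| := by ring_nf
      _ ≤ |φ a - φ b| + |ρ * (a - b)| := abs_sub _ _
      _ ≤ B * |a - b| + ρ * |a - b| := by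
          rw [abs_mul, abs_of_pos hρpos]; linarith only [h1]
      _ = (B + ρ) * |a - b| := by ring
  set C8 : ℝ := max ((1 + T₅) * (B + ρ)) (max (2*K) (2*e₄)) with hC8def
  have hC80 : 0 ≤ C8 := by
    have u1 : 0 ≤ (1 + T₅) * (B + ρ) := mul_nonneg (by linarith only [hT₅0]) (by linarith only [hB, hρpos])
    exact le_trans u1 (le_max_left _ _)
  refine ⟨ρ, K, C8, hρpos, hK0, hC80, hK, ?_⟩
  intro a b
  have hmin0 : 0 ≤ min |a| |b| := le_min (abs_nonneg a) (abs_nonneg b)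
  rcases le_or_gt T₅ (min |a| |b|) with hminT | hminT
  · have ha : T₅ ≤ |a| := le_trans hminT (min_le_left _ _)
    have hb : T₅ ≤ |b| := le_trans hminT (min_le_right _ _)
    rcases le_or_gt (a*b) 0 with hab | hab
    · -- opposite signs
      have ha0 : a ≠ 0 := by
        intro h0; rw [h0] at ha; simp at ha; linarith only [ha, hT₅1]
      have hb0 : b ≠ 0 := by
        intro h0; rw [h0] at hb; simp at hb; linarith only [hb, hT₅1]
      have habne : a*b < 0 := lt_of_le_of_ne hab (mul_ne_zero ha0 hb0)
      have habs : |a| + |b| ≤ |a - b| := by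
        rcases mul_neg_iff.mp habne with ⟨hpa, hnb⟩ | ⟨hna, hpb⟩
        · rw [abs_of_pos hpa, abs_of_neg hnb, abs_of_pos (by linarith only [hpa, hnb] : (0:ℝ) < a - b)]
          linarith only []
        · rw [abs_of_neg hna, abs_of_pos hpb, abs_of_neg (by linarith only [hna, hpb] : a - b < 0)]
          linarith only []
      have h2 : |(φ a - ρ * a) - (φ b - ρ * b)| ≤ 2*K := by
        have := abs_sub (φ a - ρ * a) (φ b - ρ * b)
        linarith only [this, hK a, hK b]
      have h3 : 1 + min |a| |b| ≤ |a - b| := by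
        have : (1:ℝ) ≤ min |a| |b| := le_trans hT₅1 hminT
        have h4 : min |a| |b| ≤ |a| := min_le_left _ _
        have h5 : min |a| |b| ≤ |b| := min_le_right _ _
        linarith only [this, h4, h5, habs]
      calc (1 + min |a| |b|) * |(φ a - ρ * a) - (φ b - ρ * b)| ≤ |a - b| * (2*K) :=
            mul_le_mul h3 h2 (abs_nonneg _) (abs_nonneg _)
        _ ≤ C8 * |a - b| := by
            rw [mul_comm]
            apply mul_le_mul_of_nonneg_right _ (abs_nonneg _)
            exact le_trans (le_max_left _ _) (le_max_right _ _)
    · -- same sign : main estimate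
      have hm1 := hmain a b ha hb hab
      have hM1 : (1:ℝ) ≤ max |a| |b| := le_trans hT₅1 (le_trans ha (le_max_left _ _))
      have h3 : 1 + min |a| |b| ≤ 2 * max |a| |b| := by
        have h4 : min |a| |b| ≤ max |a| |b| := min_le_max
        linarith only [hM1, h4]
      calc (1 + min |a| |b|) * |(φ a - ρ * a) - (φ b - ρ * b)| ≤
          (2 * max |a| |b|) * |(φ a - ρ * a) - (φ b - ρ * b)| :=
            mul_le_mul_of_nonneg_right h3 (abs_nonneg _)
        _ = 2 * (max |a| |b| * |(φ a - ρ * a) - (φ b - ρ * b)|) := by ring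
        _ ≤ 2 * (e₄ * |a - b|) := by linarith only [hm1]
        _ ≤ C8 * |a - b| := by
            have h5 : 2*e₄ ≤ C8 := le_trans (le_max_right (2*K) _) (le_max_right _ _)
            have h6 := mul_le_mul_of_nonneg_right h5 (abs_nonneg (a - b))
            linarith only [h6]
  · -- small min : plain Lipschitz
    have h1 := hζLip a b
    have h2 : 1 + min |a| |b| ≤ 1 + T₅ := by linarith only [hminT]
    calc (1 + min |a| |b|) * |(φ a - ρ * a) - (φ b - ρ * b)| ≤
        (1 + T₅) * |(φ a - ρ * a) - (φ b - ρ * b)| :=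
          mul_le_mul_of_nonneg_right h2 (abs_nonneg _)
      _ ≤ (1 + T₅) * ((B + ρ) * |a - b|) :=
          mul_le_mul_of_nonneg_left h1 (by linarith only [hT₅0])
      _ = ((1 + T₅) * (B + ρ)) * |a - b| := by ring
      _ ≤ C8 * |a - b| :=
          mul_le_mul_of_nonneg_right (le_max_left _ _) (abs_nonneg _)


lemma phi_structure (p q : Polynomial ℝ) (hp : 0 < p.natDegree) (hq : 0 < q.natDegree)
    (φ : ℝ → ℝ) (A B : ℝ) (hA : 0 < A) (hB : 0 < B)
    (hlow : ∀ s t : ℝ, A * |s - t| ≤ |φ s - φ t|)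
    (hup : ∀ s t : ℝ, |φ s - φ t| ≤ B * |s - t|)
    (h : ∀ t : ℝ, q.eval (φ t) = p.eval t) :
    ∃ c K C8 : ℝ, 0 ≤ K ∧ 0 ≤ C8 ∧ (∀ t, |φ t - c * t| ≤ K) ∧
      (∀ a b : ℝ, (1 + min |a| |b|) * |(φ a - c * a) - (φ b - c * b)| ≤ C8 * |a - b|) := by
  have hinj : Function.Injective φ := by
    intro s t hst
    by_contra hne
    have h1 := hlow s t
    rw [hst, sub_self, abs_zero] at h1
    have h2 : 0 < |s - t| := abs_pos.mpr (sub_ne_zero.mpr hne)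
    nlinarith
  have hcont : Continuous φ := by
    apply LipschitzWith.continuous (K := Real.toNNReal B)
    apply LipschitzWith.of_dist_le_mul
    intro s t
    rw [Real.dist_eq, Real.dist_eq, Real.coe_toNNReal B (le_of_lt hB)]
    exact hup s t
  rcases hcont.strictMono_of_inj hinj with hmono | hanti
  · obtain ⟨c, K, C8, _, hK0, hC80, hK, hmod⟩ :=
      phi_structure_mono p q hp hq φ A B hA hB hlow hup hmono h
    exact ⟨c, K, C8, hK0, hC80, hK, hmod⟩
  · -- apply the mono case to -φ and q ∘ (-X)
    set q' : Polynomial ℝ := q.comp (-Polynomial.X) with hq'def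
    have hq'deg : q'.natDegree = q.natDegree := by
      rw [hq'def, Polynomial.natDegree_comp, Polynomial.natDegree_neg,
        Polynomial.natDegree_X, mul_one]
    have hq' : 0 < q'.natDegree := by rw [hq'deg]; exact hq
    set φ' : ℝ → ℝ := fun t => -φ t with hφ'def
    have hmono' : StrictMono φ' := fun s t hst => neg_lt_neg (hanti hst)
    have hlow' : ∀ s t : ℝ, A * |s - t| ≤ |φ' s - φ' t| := by
      intro s t
      have : |φ' s - φ' t| = |φ s - φ t| := by
        rw [hφ'def]
        rw [show -φ s - -φ t = -(φ s - φ t) by ring, abs_neg]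
      rw [this]; exact hlow s t
    have hup' : ∀ s t : ℝ, |φ' s - φ' t| ≤ B * |s - t| := by
      intro s t
      have : |φ' s - φ' t| = |φ s - φ t| := by
        rw [hφ'def]
        rw [show -φ s - -φ t = -(φ s - φ t) by ring, abs_neg]
      rw [this]; exact hup s t
    have h' : ∀ t : ℝ, q'.eval (φ' t) = p.eval t := by
      intro t
      rw [hq'def, Polynomial.eval_comp]
      simp only [Polynomial.eval_neg, Polynomial.eval_X, hφ'def]
      rw [neg_neg]
      exact h t
    obtain ⟨c, K, C8, _, hK0, hC80, hK, hmod⟩ :=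
      phi_structure_mono p q' hp hq' φ' A B hA hB hlow' hup' hmono' h'
    refine ⟨-c, K, C8, hK0, hC80, ?_, ?_⟩
    · intro t
      have h1 := hK t
      have h2 : |φ' t - c * t| = |φ t - -c * t| := by
        rw [hφ'def, show -φ t - c * t = -(φ t - -c * t) by ring, abs_neg]
      rw [h2] at h1
      exact h1
    · intro a b
      have h1 := hmod a b
      have h2 : |(φ' a - c * a) - (φ' b - c * b)| =
          |(φ a - -c * a) - (φ b - -c * b)| := by
        rw [hφ'def, show -φ a - c * a - (-φ b - c * b) =
          -((φ a - -c * a) - (φ b - -c * b)) by ring, abs_neg]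
      rw [h2] at h1
      exact h1


end Stmt16Aux


/-- Let φ be bi-Lipschitz with g ∘ φ = f for nonconstant polynomials f, g, λ ≠ 0 and
β > 1 rational. The map Φ(x, t·x^β) = (λx, |λ|^β·φ(t)·x^β), defined on the right
half-plane, is Lipschitz on every strip {0 < x < δ}. -/
theorem stmt16 (p q : Polynomial ℝ) (hp : 0 < p.natDegree) (hq : 0 < q.natDegree)
    (φ : ℝ → ℝ) (hφ : BiLipschitz φ)
    (h : ∀ t : ℝ, q.eval (φ t) = p.eval t)
    (l : ℝ) (hl : l ≠ 0) (β : ℚ) (hβ : 1 < β)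
    (Φ : ℝ × ℝ → ℝ × ℝ)
    (hΦ : ∀ x t : ℝ, 0 < x →
      Φ (x, t * x ^ (β : ℝ)) = (l * x, |l| ^ (β : ℝ) * φ t * x ^ (β : ℝ))) :
    ∀ δ : ℝ, 0 < δ → ∃ C : ℝ, 0 < C ∧
      ∀ z w : ℝ × ℝ, 0 < z.1 → z.1 < δ → 0 < w.1 → w.1 < δ →
        dist (Φ z) (Φ w) ≤ C * dist z w := by
  intro δ hδ
  obtain ⟨hbij, A, B, hA, hB, hbound⟩ := hφ
  have hlow : ∀ s t : ℝ, A * |s - t| ≤ |φ s - φ t| := fun s t => (hbound s t).1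
  have hup : ∀ s t : ℝ, |φ s - φ t| ≤ B * |s - t| := fun s t => (hbound s t).2
  obtain ⟨c, K, C8, hK0, hC80, hK, hmod⟩ :=
    Stmt16Aux.phi_structure p q hp hq φ A B hA hB hlow hup h
  set b : ℝ := (β : ℝ) with hbdef
  have hb1 : 1 < b := by rw [hbdef]; exact_mod_cast hβ
  set d1 : ℝ := b * δ ^ (b - 1) with hd1def
  have hd10 : 0 < d1 :=
    mul_pos (by linarith) (Real.rpow_pos_of_pos hδ _)
  set C : ℝ := max |l| (|l| ^ b * ((|c| + C8) + (C8 + K) * d1)) + 1 with hCdef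
  have hC0 : 0 < C := by
    have u1 : (0:ℝ) ≤ max |l| (|l| ^ b * ((|c| + C8) + (C8 + K) * d1)) :=
      le_trans (abs_nonneg l) (le_max_left _ _)
    linarith
  refine ⟨C, hC0, ?_⟩
  have hlb : (0:ℝ) ≤ |l| ^ b := Real.rpow_nonneg (abs_nonneg l) b
  have key : ∀ z w : ℝ × ℝ, 0 < z.1 → z.1 < δ → 0 < w.1 → w.1 < δ → z.1 ≤ w.1 →
      dist (Φ z) (Φ w) ≤ C * dist z w := by
    rintro ⟨x, y⟩ ⟨x', y'⟩ hx hxδ hx' hx'δ hxx'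
    simp only at hx hxδ hx' hx'δ hxx'
    set xb : ℝ := x ^ b with hxbdef
    set xb' : ℝ := x' ^ b with hxb'def
    have hxb : 0 < xb := Real.rpow_pos_of_pos hx b
    have hxb' : 0 < xb' := Real.rpow_pos_of_pos hx' b
    have hxble : xb ≤ xb' := Real.rpow_le_rpow (le_of_lt hx) hxx' (by linarith only [hb1])
    have hxbd : xb' - xb ≤ d1 * (x' - x) := by
      rw [hd1def]
      exact Stmt16Aux.rpow_diff_le (le_of_lt hb1) hδ hx hxx' (le_of_lt hx'δ)
    set t : ℝ := y / xb with htdef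
    set t' : ℝ := y' / xb' with ht'def
    set t'' : ℝ := y' / xb with ht''def
    have hyt : t * xb = y := div_mul_cancel₀ _ (ne_of_gt hxb)
    have hyt' : t' * xb' = y' := div_mul_cancel₀ _ (ne_of_gt hxb')
    have hyt'' : t'' * xb = y' := div_mul_cancel₀ _ (ne_of_gt hxb)
    have hΦz : Φ (x, y) = (l * x, |l| ^ b * φ t * xb) := by
      conv_lhs => rw [← hyt]
      exact hΦ x t hx
    have hΦw : Φ (x', y') = (l * x', |l| ^ b * φ t' * xb') := by
      conv_lhs => rw [← hyt']
      exact hΦ x' t' hx'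
    -- distance lower bounds
    have hD1 : |x - x'| ≤ dist ((x, y) : ℝ × ℝ) ((x', y') : ℝ × ℝ) := by
      rw [Prod.dist_eq]
      exact le_trans (le_of_eq (Real.dist_eq x x').symm) (le_max_left _ _)
    have hD2 : |y - y'| ≤ dist ((x, y) : ℝ × ℝ) ((x', y') : ℝ × ℝ) := by
      rw [Prod.dist_eq]
      exact le_trans (le_of_eq (Real.dist_eq y y').symm) (le_max_right _ _)
    have hD0 : 0 ≤ dist ((x, y) : ℝ × ℝ) ((x', y') : ℝ × ℝ) := dist_nonneg
    -- the central estimate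
    have hζLip : ∀ a a' : ℝ, |(φ a - c * a) - (φ a' - c * a')| ≤ C8 * |a - a'| := by
      intro a a'
      have h1 := hmod a a'
      have h2 : (0:ℝ) ≤ min |a| |a'| := le_min (abs_nonneg a) (abs_nonneg a')
      have h3 := le_mul_of_one_le_left (abs_nonneg ((φ a - c * a) - (φ a' - c * a')))
        (by linarith only [h2] : (1:ℝ) ≤ 1 + min |a| |a'|)
      linarith only [h1, h3]
    have hterm2 : |(φ t - c * t) - (φ t'' - c * t'')| * xb ≤ C8 * |y - y'| := by
      have h1 := hζLip t t''
      have h2 : |t - t''| * xb = |y - y'| := by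
        rw [htdef, ht''def, div_sub_div_same, abs_div, abs_of_pos hxb,
          div_mul_cancel₀ _ (ne_of_gt hxb)]
      calc |(φ t - c * t) - (φ t'' - c * t'')| * xb ≤ (C8 * |t - t''|) * xb :=
            mul_le_mul_of_nonneg_right h1 (le_of_lt hxb)
        _ = C8 * (|t - t''| * xb) := by ring
        _ = C8 * |y - y'| := by rw [h2]
    have hterm3 : |(φ t'' - c * t'') - (φ t' - c * t')| * xb ≤ C8 * (xb' - xb) := by
      set Y : ℝ := |y'| with hYdef
      have hY0 : 0 ≤ Y := abs_nonneg y'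
      have habs'' : |t''| = Y / xb := by rw [ht''def, abs_div, abs_of_pos hxb]
      have habs' : |t'| = Y / xb' := by rw [ht'def, abs_div, abs_of_pos hxb']
      have hminle : |t'| ≤ |t''| := by
        rw [habs', habs'']
        exact div_le_div_of_nonneg_left hY0 hxb hxble
      have H := hmod t'' t'
      rw [min_eq_right hminle, habs'] at H
      have hdiff : |t'' - t'| = Y * (xb' - xb) / (xb * xb') := by
        rw [ht''def, ht'def, div_sub_div _ _ (ne_of_gt hxb) (ne_of_gt hxb'), abs_div,
          abs_of_pos (mul_pos hxb hxb')]
        congr 1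
        rw [show y' * xb' - xb * y' = y' * (xb' - xb) by ring, abs_mul,
          abs_of_nonneg (by linarith only [hxble] : (0:ℝ) ≤ xb' - xb)]
      rw [hdiff] at H
      set Δ : ℝ := |(φ t'' - c * t'') - (φ t' - c * t')| with hΔdef
      have hΔ0 : 0 ≤ Δ := abs_nonneg _
      have H2 := mul_le_mul_of_nonneg_left H (le_of_lt (mul_pos hxb hxb'))
      have e5 : xb * xb' * ((1 + Y / xb') * Δ) = (xb * xb' + Y * xb) * Δ := by
        field_simp
      have e6 : xb * xb' * (C8 * (Y * (xb' - xb) / (xb * xb'))) = C8 * Y * (xb' - xb) := by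
        field_simp
      rw [e5, e6] at H2
      have H5 : C8 * Y * (xb' - xb) ≤ (C8 * (xb' - xb)) * (xb' + Y) := by
        have u := mul_nonneg (mul_nonneg hC80 (by linarith only [hxble] : (0:ℝ) ≤ xb' - xb)) (le_of_lt hxb')
        linarith only [u]
      have H6 : (Δ * xb) * (xb' + Y) ≤ (C8 * (xb' - xb)) * (xb' + Y) := by
        have : (Δ * xb) * (xb' + Y) = (xb * xb' + Y * xb) * Δ := by ring
        linarith only [H2, H5, this]
      exact le_of_mul_le_mul_right H6 (by linarith only [hxb', hY0] : (0:ℝ) < xb' + Y)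
    have hterm4 : |φ t' - c * t'| * (xb' - xb) ≤ K * (xb' - xb) :=
      mul_le_mul_of_nonneg_right (hK t') (by linarith only [hxble])
    have hiden : φ t * xb - φ t' * xb' =
        c * (y - y') + ((φ t - c * t) - (φ t'' - c * t'')) * xb
        + ((φ t'' - c * t'') - (φ t' - c * t')) * xb + (φ t' - c * t') * (xb - xb') := by
      linear_combination c * hyt - c * hyt' + c * hyt'' - c * hyt''
    have hMain2 : |φ t * xb - φ t' * xb'| ≤
        (|c| + C8) * |y - y'| + (C8 + K) * (d1 * (x' - x)) := by
      have u1 : |c * (y - y')| = |c| * |y - y'| := by rw [abs_mul]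
      have u2 : |(φ t' - c * t') * (xb - xb')| ≤ K * (xb' - xb) := by
        rw [abs_mul, abs_of_nonpos (by linarith only [hxble] : xb - xb' ≤ 0)]
        rw [show -(xb - xb') = xb' - xb by ring]
        exact hterm4
      have u3 : |((φ t - c * t) - (φ t'' - c * t'')) * xb| ≤ C8 * |y - y'| := by
        rw [abs_mul, abs_of_pos hxb]
        exact hterm2
      have u4 : |((φ t'' - c * t'') - (φ t' - c * t')) * xb| ≤ C8 * (xb' - xb) := by
        rw [abs_mul, abs_of_pos hxb]
        exact hterm3
      have u5 : (0:ℝ) ≤ xb' - xb := by linarith only [hxble]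
      have u6 : C8 * (xb' - xb) ≤ C8 * (d1 * (x' - x)) :=
        mul_le_mul_of_nonneg_left hxbd hC80
      have u7 : K * (xb' - xb) ≤ K * (d1 * (x' - x)) :=
        mul_le_mul_of_nonneg_left hxbd hK0
      rw [hiden]
      have tri1 := abs_add_le (c * (y - y') + ((φ t - c * t) - (φ t'' - c * t'')) * xb
        + ((φ t'' - c * t'') - (φ t' - c * t')) * xb) ((φ t' - c * t') * (xb - xb'))
      have tri2 := abs_add_le (c * (y - y') + ((φ t - c * t) - (φ t'' - c * t'')) * xb)
        (((φ t'' - c * t'') - (φ t' - c * t')) * xb)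
      have tri3 := abs_add_le (c * (y - y')) (((φ t - c * t) - (φ t'' - c * t'')) * xb)
      linarith only [tri1, tri2, tri3, u1.le, u1.ge, u2, u3, u4, u6, u7]
    -- put the two coordinates together
    rw [hΦz, hΦw, Prod.dist_eq]
    apply max_le
    · -- first coordinate
      rw [Real.dist_eq, show l * x - l * x' = l * (x - x') by ring, abs_mul]
      calc |l| * |x - x'| ≤ |l| * dist ((x, y) : ℝ × ℝ) ((x', y') : ℝ × ℝ) :=
            mul_le_mul_of_nonneg_left hD1 (abs_nonneg l)
        _ ≤ C * dist ((x, y) : ℝ × ℝ) ((x', y') : ℝ × ℝ) := by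
            apply mul_le_mul_of_nonneg_right _ hD0
            rw [hCdef]
            have := le_max_left |l| (|l| ^ b * ((|c| + C8) + (C8 + K) * d1))
            linarith only [this]
    · -- second coordinate
      rw [Real.dist_eq, show |l| ^ b * φ t * xb - |l| ^ b * φ t' * xb'
        = |l| ^ b * (φ t * xb - φ t' * xb') by ring, abs_mul, abs_of_nonneg hlb]
      have hx'x : x' - x ≤ dist ((x, y) : ℝ × ℝ) ((x', y') : ℝ × ℝ) := by
        have : x' - x ≤ |x - x'| := by
          rw [abs_sub_comm]; exact le_abs_self _
        linarith only [this, hD1]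
      calc |l| ^ b * |φ t * xb - φ t' * xb'| ≤
          |l| ^ b * ((|c| + C8) * |y - y'| + (C8 + K) * (d1 * (x' - x))) :=
            mul_le_mul_of_nonneg_left hMain2 hlb
        _ ≤ |l| ^ b * (((|c| + C8) + (C8 + K) * d1) * dist ((x, y) : ℝ × ℝ) ((x', y') : ℝ × ℝ)) := by
            apply mul_le_mul_of_nonneg_left _ hlb
            have v1 : (|c| + C8) * |y - y'| ≤ (|c| + C8) * dist ((x, y) : ℝ × ℝ) ((x', y') : ℝ × ℝ) :=
              mul_le_mul_of_nonneg_left hD2 (by positivity)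
            have v2 : (C8 + K) * d1 * (x' - x) ≤
                (C8 + K) * d1 * dist ((x, y) : ℝ × ℝ) ((x', y') : ℝ × ℝ) :=
              mul_le_mul_of_nonneg_left hx'x (by positivity)
            linarith only [v1, v2]
        _ ≤ C * dist ((x, y) : ℝ × ℝ) ((x', y') : ℝ × ℝ) := by
            have w0 := le_max_right |l| (|l| ^ b * ((|c| + C8) + (C8 + K) * d1))
            have w1 := mul_le_mul_of_nonneg_right w0 hD0
            rw [hCdef]
            linarith only [w1, hD0]
  intro z w hz hzδ hw hwδ
  rcases le_total z.1 w.1 with hzw | hzw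
  · exact key z w hz hzδ hw hwδ hzw
  · rw [dist_comm (Φ z) (Φ w), dist_comm z w]
    exact key w z hw hwδ hz hzδ hzw
end

section
/- Let F(X,Y) = a·X^d and G(X,Y) = b·X^d with a, b nonzero reals and d ≥ 1 even. Then there exists a germ of semialgebraic bi-Lipschitz homeomorphism Φ : (ℝ²,0) → (ℝ²,0) with G ∘ Φ = F if and only if a and b have the same sign. If d is odd, such a Φ always exists. -/
/-- Semialgebraic subsets of ℝⁿ: the smallest collection containing zero sets and
positivity sets of polynomials and closed under union, intersection, complement. -/
inductive IsSemialgebraicSet {n : ℕ} : Set (Fin n → ℝ) → Prop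
  | zero_set (p : MvPolynomial (Fin n) ℝ) :
      IsSemialgebraicSet {x | MvPolynomial.eval x p = 0}
  | pos_set (p : MvPolynomial (Fin n) ℝ) :
      IsSemialgebraicSet {x | 0 < MvPolynomial.eval x p}
  | union {s t : Set (Fin n → ℝ)} :
      IsSemialgebraicSet s → IsSemialgebraicSet t → IsSemialgebraicSet (s ∪ t)
  | inter {s t : Set (Fin n → ℝ)} :
      IsSemialgebraicSet s → IsSemialgebraicSet t → IsSemialgebraicSet (s ∩ t)
  | compl {s : Set (Fin n → ℝ)} :
      IsSemialgebraicSet s → IsSemialgebraicSet sᶜ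

/-- There is a germ of semialgebraic bi-Lipschitz homeomorphism Φ : (ℝ²,0) → (ℝ²,0)
with G ∘ Φ = F: a bi-Lipschitz bijection between neighborhoods of the origin,
fixing the origin, with semialgebraic graph, satisfying G ∘ Φ = F near 0. -/
def SemialgBiLipGermEq (F G : ℝ × ℝ → ℝ) : Prop :=
  ∃ (U V : Set (ℝ × ℝ)) (Φ : ℝ × ℝ → ℝ × ℝ),
    U ∈ nhds (0 : ℝ × ℝ) ∧ V ∈ nhds (0 : ℝ × ℝ) ∧
    Φ 0 = 0 ∧ Set.BijOn Φ U V ∧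
    (∃ A B : ℝ, 0 < A ∧ 0 < B ∧ ∀ z ∈ U, ∀ w ∈ U,
      A * dist z w ≤ dist (Φ z) (Φ w) ∧ dist (Φ z) (Φ w) ≤ B * dist z w) ∧
    IsSemialgebraicSet
      {x : Fin 4 → ℝ | (x 0, x 1) ∈ U ∧ Φ (x 0, x 1) = (x 2, x 3)} ∧
    ∀ z ∈ U, G (Φ z) = F z

/-- Auxiliary: a linear scaling in the first coordinate gives the equivalence. -/
lemma key_lemma (a b c : ℝ) (hc : c ≠ 0) (d : ℕ) (h : b * c ^ d = a) :
    SemialgBiLipGermEq (fun z => a * z.1 ^ d) (fun z => b * z.1 ^ d) := by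
  refine ⟨Set.univ, Set.univ, fun z => (c * z.1, z.2), Filter.univ_mem, Filter.univ_mem,
    by simp, ?_, ?_, ?_, ?_⟩
  · refine ⟨fun _ _ => trivial, fun z _ w _ hzw => ?_, fun w _ => ⟨(c⁻¹ * w.1, w.2), trivial, ?_⟩⟩
    · simp only [Prod.mk.injEq] at hzw
      exact Prod.ext (mul_left_cancel₀ hc hzw.1) hzw.2
    · simp [mul_inv_cancel_left₀ hc]
  · refine ⟨min |c| 1, max |c| 1, lt_min (abs_pos.mpr hc) one_pos,
      lt_max_of_lt_right one_pos, fun z _ w _ => ?_⟩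
    have hcd : dist (c * z.1) (c * w.1) = |c| * dist z.1 w.1 := by
      simp [Real.dist_eq, ← mul_sub, abs_mul]
    have hd1 : (0:ℝ) ≤ dist z.1 w.1 := dist_nonneg
    have hd2 : (0:ℝ) ≤ dist z.2 w.2 := dist_nonneg
    have habs : (0:ℝ) ≤ |c| := abs_nonneg c
    simp only [Prod.dist_eq, hcd]
    set p := dist z.1 w.1
    set q := dist z.2 w.2
    constructor
    · rcases max_cases p q with ⟨h1, h2⟩ | ⟨h1, h2⟩ <;> rw [h1]
      · calc min |c| 1 * p ≤ |c| * p := by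
              apply mul_le_mul_of_nonneg_right (min_le_left _ _) hd1
          _ ≤ max (|c| * p) q := le_max_left _ _
      · calc min |c| 1 * q ≤ 1 * q := by
              apply mul_le_mul_of_nonneg_right (min_le_right _ _) hd2
          _ = q := one_mul q
          _ ≤ max (|c| * p) q := le_max_right _ _
    · apply max_le
      · exact mul_le_mul (le_max_left _ _) (le_max_left _ _) hd1 (le_trans habs (le_max_left _ _))
      · calc q = 1 * q := (one_mul q).symm
          _ ≤ max |c| 1 * max p q := by
              apply mul_le_mul (le_max_right _ _) (le_max_right _ _) hd2
                (le_trans zero_le_one (le_max_right _ _))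
  · have hset : {x : Fin 4 → ℝ | (x 0, x 1) ∈ Set.univ ∧
        ((fun z : ℝ × ℝ => (c * z.1, z.2)) (x 0, x 1)) = (x 2, x 3)} =
        {x : Fin 4 → ℝ | MvPolynomial.eval x (MvPolynomial.C c * MvPolynomial.X 0
          - MvPolynomial.X 2) = 0} ∩
        {x : Fin 4 → ℝ | MvPolynomial.eval x (MvPolynomial.X 1 - MvPolynomial.X 3) = 0} := by
      ext x
      simp [Prod.ext_iff, sub_eq_zero]
    rw [hset]
    exact (IsSemialgebraicSet.zero_set _).inter (IsSemialgebraicSet.zero_set _)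
  · intro z _
    simp only
    rw [mul_pow, ← mul_assoc, h]

/-- For F = a·X^d and G = b·X^d (a, b ≠ 0, d ≥ 1): if d is even, F and G are
ℛ-semialgebraically Lipschitz equivalent iff a and b have the same sign; if d is
odd, they always are. -/
theorem stmt18 (a b : ℝ) (ha : a ≠ 0) (hb : b ≠ 0) (d : ℕ) (hd : 1 ≤ d) :
    (Even d →
      (SemialgBiLipGermEq (fun z => a * z.1 ^ d) (fun z => b * z.1 ^ d) ↔
        0 < a * b)) ∧
    (Odd d →
      SemialgBiLipGermEq (fun z => a * z.1 ^ d) (fun z => b * z.1 ^ d)) := by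
  have hd0 : d ≠ 0 := by omega
  constructor
  · intro hev
    constructor
    · rintro ⟨U, V, Φ, hU, hV, hΦ0, hbij, hlip, hsa, heq⟩
      obtain ⟨ε, hε, hball⟩ := Metric.mem_nhds_iff.mp hU
      set z : ℝ × ℝ := (ε / 2, 0) with hz
      have hzU : z ∈ U := by
        apply hball
        simp only [Metric.mem_ball, Prod.dist_eq, Real.dist_eq, hz]
        simp [abs_of_pos (half_pos hε)]
        linarith
      have h1 : b * (Φ z).1 ^ d = a * (ε / 2) ^ d := by simpa using heq z hzU
      have hpos : (0:ℝ) < (ε / 2) ^ d := pow_pos (half_pos hε) d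
      have ht : (0:ℝ) ≤ (Φ z).1 ^ d := hev.pow_nonneg _
      have hne : b * (Φ z).1 ^ d ≠ 0 := by
        rw [h1]; exact mul_ne_zero ha (ne_of_gt hpos)
      have htpos : (0:ℝ) < (Φ z).1 ^ d := by
        rcases ht.lt_or_eq with h | h
        · exact h
        · exact absurd (by rw [← h, mul_zero]) hne
      have key : b * b * ((Φ z).1 ^ d) = (a * b) * (ε / 2) ^ d := by
        linear_combination b * h1
      have h2 : 0 < (a * b) * (ε / 2) ^ d := key ▸ mul_pos (mul_self_pos.mpr hb) htpos
      nlinarith [h2, hpos]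
    · intro hab
      have hba : 0 < a / b := div_pos_iff.mpr (by
        rcases mul_pos_iff.mp hab with ⟨h1, h2⟩ | ⟨h1, h2⟩
        · exact Or.inl ⟨h1, h2⟩
        · exact Or.inr ⟨h1, h2⟩)
      set c := (a / b) ^ ((d : ℝ)⁻¹) with hcdef
      have hcpos : 0 < c := Real.rpow_pos_of_pos hba _
      have hcd : c ^ d = a / b := by
        rw [hcdef]
        exact Real.rpow_inv_natCast_pow hba.le hd0
      exact key_lemma a b c (ne_of_gt hcpos) d (by rw [hcd]; field_simp)
  · intro hodd
    rcases lt_or_gt_of_ne (div_ne_zero ha hb : a / b ≠ 0) with hneg | hpos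
    · set c := -((-(a / b)) ^ ((d : ℝ)⁻¹)) with hcdef
      have hpos' : 0 < -(a / b) := by linarith
      have hcne : c ≠ 0 := by
        simp only [hcdef, neg_ne_zero]
        exact ne_of_gt (Real.rpow_pos_of_pos hpos' _)
      have hcd : c ^ d = a / b := by
        rw [hcdef, hodd.neg_pow, Real.rpow_inv_natCast_pow hpos'.le hd0, neg_neg]
      exact key_lemma a b c hcne d (by rw [hcd]; field_simp)
    · set c := (a / b) ^ ((d : ℝ)⁻¹) with hcdef
      have hcpos : 0 < c := Real.rpow_pos_of_pos hpos _
      have hcd : c ^ d = a / b := Real.rpow_inv_natCast_pow hpos.le hd0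
      exact key_lemma a b c (ne_of_gt hcpos) d (by rw [hcd]; field_simp)
end

section
/- For real parameters λ, μ > 0, define f_λ(t) = t³ − 3λt + 1 and f_μ(t) = t³ − 3μt + 1. If f_λ and f_μ are Lipschitz equivalent, then λ = μ. -/
/-- If a cubic t³ - 3λt + q has exactly two roots t1 ≠ t2, then q² = 4λ³. -/
lemma cubic_two_roots (lam q t1 t2 : ℝ) (hne : t1 ≠ t2)
    (h1 : t1^3 - 3*lam*t1 + q = 0) (h2 : t2^3 - 3*lam*t2 + q = 0)
    (hall : ∀ t : ℝ, t^3 - 3*lam*t + q = 0 → t = t1 ∨ t = t2) :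
    q^2 = 4*lam^3 := by
  have hsum : t1^2 + t1*t2 + t2^2 = 3*lam := by
    have hfac : (t1 - t2) * (t1^2 + t1*t2 + t2^2 - 3*lam) = 0 := by
      linear_combination h1 - h2
    rcases mul_eq_zero.1 hfac with h' | h'
    · exact absurd (sub_eq_zero.1 h') hne
    · linarith [h']
  have hr : (-(t1+t2))^3 - 3*lam*(-(t1+t2)) + q = 0 := by
    linear_combination h1 - (2*t1 + t2) * hsum
  rcases hall _ hr with he | he
  · have ht2 : t2 = -2*t1 := by linarith
    subst ht2
    have hl : lam = t1^2 := by linear_combination (-1/3 : ℝ) * hsum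
    have hq : q = 2*t1^3 := by linear_combination h1 + 3*t1*hl
    rw [hq, hl]; ring
  · have ht1 : t1 = -2*t2 := by linarith
    subst ht1
    have hl : lam = t2^2 := by linear_combination (-1/3 : ℝ) * hsum
    have hq : q = 2*t2^3 := by linear_combination h2 + 3*t2*hl
    rw [hq, hl]; ring

set_option maxHeartbeats 1000000 in
/-- For λ, μ > 0, if f_λ(t) = t³ − 3λt + 1 and f_μ(t) = t³ − 3μt + 1 are Lipschitz
equivalent, then λ = μ. -/
theorem stmt19 (lam mu : ℝ) (hlam : 0 < lam) (hmu : 0 < mu)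
    (φ : ℝ → ℝ) (hφ : BiLipschitz φ) (c : ℝ) (hc : 0 < c)
    (h : ∀ t : ℝ, (φ t) ^ 3 - 3 * mu * (φ t) + 1 = c * (t ^ 3 - 3 * lam * t + 1)) :
    lam = mu := by
  obtain ⟨⟨hinj, hsurj⟩, -⟩ := hφ
  have hc0 : c ≠ 0 := ne_of_gt hc
  set m := Real.sqrt mu with hm_def
  have hm0 : 0 < m := Real.sqrt_pos.2 hmu
  have hm : m^2 = mu := Real.sq_sqrt hmu.le
  -- values attained exactly twice by g(x) = x³ - 3μx + 1
  have rootsA : ∀ x : ℝ, x^3 - 3*mu*x + 1 = 1 + 2*mu*m ↔ (x = -m ∨ x = 2*m) := by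
    intro x
    constructor
    · intro hx
      have hfac : (x + m)^2 * (x - 2*m) = 0 := by
        linear_combination hx - (3*x + 2*m) * hm
      rcases mul_eq_zero.1 hfac with h' | h'
      · left
        have := pow_eq_zero_iff (two_ne_zero) |>.1 h'
        linarith
      · right; linarith
    · rintro (rfl | rfl)
      · linear_combination (-m) * hm
      · linear_combination 8*m*hm
  have rootsB : ∀ x : ℝ, x^3 - 3*mu*x + 1 = 1 - 2*mu*m ↔ (x = m ∨ x = -2*m) := by
    intro x
    constructor
    · intro hx
      have hfac : (x - m)^2 * (x + 2*m) = 0 := by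
        linear_combination hx + (2*m - 3*x) * hm
      rcases mul_eq_zero.1 hfac with h' | h'
      · left
        have := pow_eq_zero_iff (two_ne_zero) |>.1 h'
        linarith
      · right; linarith
    · rintro (rfl | rfl)
      · linear_combination m * hm
      · linear_combination (-8*m) * hm
  -- first value
  obtain ⟨t1, ht1⟩ := hsurj (-m)
  obtain ⟨t2, ht2⟩ := hsurj (2*m)
  have hne12 : t1 ≠ t2 := by
    intro he
    rw [he, ht2] at ht1
    linarith
  have E1 : c * (t1^3 - 3*lam*t1 + 1) = 1 + 2*mu*m :=
    (h t1).symm.trans ((rootsA (φ t1)).2 (Or.inl ht1))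
  have E2 : c * (t2^3 - 3*lam*t2 + 1) = 1 + 2*mu*m :=
    (h t2).symm.trans ((rootsA (φ t2)).2 (Or.inr ht2))
  have root1 : t1^3 - 3*lam*t1 + (1 - (1 + 2*mu*m)/c) = 0 := by
    field_simp
    linear_combination E1
  have root2 : t2^3 - 3*lam*t2 + (1 - (1 + 2*mu*m)/c) = 0 := by
    field_simp
    linear_combination E2
  have hall1 : ∀ t : ℝ, t^3 - 3*lam*t + (1 - (1 + 2*mu*m)/c) = 0 → t = t1 ∨ t = t2 := by
    intro t ht
    have hE : c * (t^3 - 3*lam*t + 1) = 1 + 2*mu*m := by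
      field_simp at ht
      linear_combination ht
    have hg : (φ t)^3 - 3*mu*(φ t) + 1 = 1 + 2*mu*m := (h t).trans hE
    rcases (rootsA (φ t)).1 hg with h' | h'
    · exact Or.inl (hinj (h'.trans ht1.symm))
    · exact Or.inr (hinj (h'.trans ht2.symm))
  have key1 : (1 - (1 + 2*mu*m)/c)^2 = 4*lam^3 :=
    cubic_two_roots lam _ t1 t2 hne12 root1 root2 hall1
  -- second value
  obtain ⟨t3, ht3⟩ := hsurj m
  obtain ⟨t4, ht4⟩ := hsurj (-2*m)
  have hne34 : t3 ≠ t4 := by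
    intro he
    rw [he, ht4] at ht3
    linarith
  have E3 : c * (t3^3 - 3*lam*t3 + 1) = 1 - 2*mu*m :=
    (h t3).symm.trans ((rootsB (φ t3)).2 (Or.inl ht3))
  have E4 : c * (t4^3 - 3*lam*t4 + 1) = 1 - 2*mu*m :=
    (h t4).symm.trans ((rootsB (φ t4)).2 (Or.inr ht4))
  have root3 : t3^3 - 3*lam*t3 + (1 - (1 - 2*mu*m)/c) = 0 := by
    field_simp
    linear_combination E3
  have root4 : t4^3 - 3*lam*t4 + (1 - (1 - 2*mu*m)/c) = 0 := by
    field_simp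
    linear_combination E4
  have hall2 : ∀ t : ℝ, t^3 - 3*lam*t + (1 - (1 - 2*mu*m)/c) = 0 → t = t3 ∨ t = t4 := by
    intro t ht
    have hE : c * (t^3 - 3*lam*t + 1) = 1 - 2*mu*m := by
      field_simp at ht
      linear_combination ht
    have hg : (φ t)^3 - 3*mu*(φ t) + 1 = 1 - 2*mu*m := (h t).trans hE
    rcases (rootsB (φ t)).1 hg with h' | h'
    · exact Or.inl (hinj (h'.trans ht3.symm))
    · exact Or.inr (hinj (h'.trans ht4.symm))
  have key2 : (1 - (1 - 2*mu*m)/c)^2 = 4*lam^3 :=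
    cubic_two_roots lam _ t3 t4 hne34 root3 root4 hall2
  -- conclude c = 1
  have hd : (1 - (1 + 2*mu*m)/c)^2 = (1 - (1 - 2*mu*m)/c)^2 := key1.trans key2.symm
  have hd' : (c - (1 + 2*mu*m))^2 = (c - (1 - 2*mu*m))^2 := by
    have h1 : (c - (1 + 2*mu*m))^2 = (1 - (1 + 2*mu*m)/c)^2 * c^2 := by
      field_simp
    have h2 : (c - (1 - 2*mu*m))^2 = (1 - (1 - 2*mu*m)/c)^2 * c^2 := by
      field_simp
    rw [h1, h2, hd]
  have hmum : 0 < mu * m := mul_pos hmu hm0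
  have hc1 : c = 1 := by
    have h8 : 8*(mu*m)*(c - 1) = 0 := by linear_combination -hd'
    have := mul_eq_zero.1 h8
    rcases this with h' | h'
    · exfalso; rcases mul_eq_zero.1 h' with h'' | h'' <;> nlinarith
    · linarith
  have hlm : lam^3 = mu^3 := by
    rw [hc1] at key1
    rw [div_one] at key1
    have h2m : (2*mu*m)^2 = 4*lam^3 := by linear_combination key1
    linear_combination (-1/4 : ℝ) * h2m + mu^2 * hm
  nlinarith [hlm, sq_nonneg (lam - mu), sq_nonneg (lam + mu), mul_pos hlam hmu]
end
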